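/- arXiv:2303.05882 — 6 statements merged into one kernel-verified Lean document; each statement's English description precedes it below -/
import Mathlib

section
/- Let 0 < l₁ < l₂ < L, let c₁, c₂, ρ, α, β, γ, μ be positive reals with α₁ := α − γ²β > 0, and let d₂ : ℝ → ℝ be continuous and nonnegative on [l₁, l₂]. Suppose u, v, p, y : ℝ × ℝ → ℂ are twice continuously differentiable (in (x,t)) on [0,l₁]×[0,∞), [l₁,l₂]×[0,∞), [l₁,l₂]×[0,∞), [l₂,L]×[0,∞) respectively, and satisfy for all t ≥ 0: u_tt = c₁ u_xx on [0,l₁]; ρ v_tt − α v_xx + γβ p_xx + d₂(x) v_t = 0 and μ p_tt − β p_xx + γβ v_xx = 0 on [l₁,l₂]; y_tt = c₂ y_xx on [l₂,L]; the boundary conditions u(0,t)=0, y(L,t)=0; the continuity conditions v(l₁,t)=u(l₁,t), v(l₂,t)=y(l₂,t); and the transmission conditions α v_x(l₁,t) − γβ p_x(l₁,t) = c₁ u_x(l₁,t), α v_x(l₂,t) − γβ p_x(l₂,t) = c₂ y_x(l₂,t), p_x(l₁,t) = γ v_x(l₁,t), p_x(l₂,t) = γ v_x(l₂,t). Define E(t)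 = (1/2)∫₀^{l₁}(|u_t|² + c₁|u_x|²)dx + (1/2)∫_{l₁}^{l₂}(ρ|v_t|² + α₁|v_x|² + μ|p_t|² + β|γ v_x − p_x|²)dx + (1/2)∫_{l₂}^{L}(|y_t|² + c₂|y_x|²)dx. Then for every t > 0, E is differentiable at t and E′(t) = −∫_{l₁}^{l₂} d₂(x) |v_t(x,t)|² dx. -/
open Set

open MeasureTheory intervalIntegral Metric

/-- `f : (x, t) ↦ f x t` is twice continuously differentiable on
`[a, b] × [0, ∞)`, with partial derivatives `fx, ft, fxx, ftt, fxt`. -/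
def IsC2On (f fx ft fxx ftt fxt : ℝ → ℝ → ℂ) (a b : ℝ) : Prop :=
  (∀ x ∈ Set.Icc a b, ∀ t ∈ Set.Ici (0 : ℝ),
      HasDerivAt (fun s => f s t) (fx x t) x ∧
      HasDerivAt (fun s => f x s) (ft x t) t ∧
      HasDerivAt (fun s => fx s t) (fxx x t) x ∧
      HasDerivAt (fun s => ft x s) (ftt x t) t ∧
      HasDerivAt (fun s => fx x s) (fxt x t) t) ∧
  ContinuousOn (fun q : ℝ × ℝ => f q.1 q.2) (Set.Icc a b ×ˢ Set.Ici 0) ∧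
  ContinuousOn (fun q : ℝ × ℝ => fx q.1 q.2) (Set.Icc a b ×ˢ Set.Ici 0) ∧
  ContinuousOn (fun q : ℝ × ℝ => ft q.1 q.2) (Set.Icc a b ×ˢ Set.Ici 0) ∧
  ContinuousOn (fun q : ℝ × ℝ => fxx q.1 q.2) (Set.Icc a b ×ˢ Set.Ici 0) ∧
  ContinuousOn (fun q : ℝ × ℝ => ftt q.1 q.2) (Set.Icc a b ×ˢ Set.Ici 0) ∧
  ContinuousOn (fun q : ℝ × ℝ => fxt q.1 q.2) (Set.Icc a b ×ˢ Set.Ici 0)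

/-- Slice continuity. -/
lemma contOn_slice {E : Type*} [TopologicalSpace E] {X : ℝ → ℝ → E} {a b t : ℝ} (ht : 0 ≤ t)
    (h : ContinuousOn (fun q : ℝ × ℝ => X q.1 q.2) (Icc a b ×ˢ Ici 0)) :
    ContinuousOn (fun x => X x t) (Icc a b) := by
  have : ContinuousOn (fun x : ℝ => ((x, t) : ℝ × ℝ)) (Icc a b) :=
    (continuous_id.prodMk continuous_const).continuousOn
  exact h.comp this (fun x hx => mem_prod.2 ⟨hx, ht⟩)

/-- Differentiation under the interval integral. -/
lemma hasDerivAt_param_integral {E : Type*} [NormedAddCommGroup E] [NormedSpace ℝ E]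
    {a b : ℝ} (hab : a ≤ b) {g g' : ℝ → ℝ → E} {t : ℝ} (ht : 0 < t)
    (hderiv : ∀ x ∈ Icc a b, ∀ s ∈ Ioi (0:ℝ), HasDerivAt (fun s => g x s) (g' x s) s)
    (hgc : ContinuousOn (fun q : ℝ × ℝ => g q.1 q.2) (Icc a b ×ˢ Ici 0))
    (hg'c : ContinuousOn (fun q : ℝ × ℝ => g' q.1 q.2) (Icc a b ×ˢ Ici 0)) :
    HasDerivAt (fun s => ∫ x in a..b, g x s) (∫ x in a..b, g' x t) t := by
  have hsub : uIoc a b ⊆ Icc a b := by rw [uIoc_of_le hab]; exact Ioc_subset_Icc_self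
  have hIoc : MeasurableSet (uIoc a b) := by rw [uIoc_of_le hab]; exact measurableSet_Ioc
  have hball : ∀ s ∈ ball t (t/2), t/2 ≤ s ∧ s ≤ 3*t/2 := by
    intro s hs
    have := abs_lt.1 (by simpa [Real.dist_eq] using hs)
    constructor <;> linarith [this.1, this.2]
  obtain ⟨C, hC⟩ :=
    (isCompact_Icc.prod (isCompact_Icc (a := t/2) (b := 3*t/2))).exists_bound_of_continuousOn
      (hg'c.mono (fun q hq => ⟨hq.1, by have := hq.2.1; simp only [mem_Ici]; linarith⟩))
  have key := intervalIntegral.hasDerivAt_integral_of_dominated_loc_of_deriv_le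
    (F := fun s x => g x s) (F' := fun s x => g' x s) (x₀ := t) (bound := fun _ => C)
    (μ := volume) (a := a) (b := b) (ball_mem_nhds t (half_pos ht))
    (Filter.eventually_of_mem (ball_mem_nhds t (half_pos ht)) (fun s hs => ?meas))
    ?int ?meas' ?bnd ?bint ?diff
  · exact key.2
  case meas =>
    have hs0 : (0:ℝ) ≤ s := by linarith [(hball s hs).1]
    exact ((contOn_slice hs0 hgc).mono hsub).aestronglyMeasurable hIoc
  case int =>
    exact ContinuousOn.intervalIntegrable
      (by rw [uIcc_of_le hab]; exact contOn_slice ht.le hgc)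
  case meas' =>
    exact ((contOn_slice ht.le hg'c).mono hsub).aestronglyMeasurable hIoc
  case bnd =>
    refine Filter.Eventually.of_forall (fun x hx s hs => ?_)
    exact hC (x, s) ⟨hsub hx, (hball s hs).1, (hball s hs).2⟩
  case bint => exact intervalIntegrable_const
  case diff =>
    refine Filter.Eventually.of_forall (fun x hx s hs => ?_)
    exact hderiv x (hsub hx) s (by simp only [mem_Ioi]; linarith [(hball s hs).1])

section helpers
open Complex

lemma norm_sq_re (z : ℂ) : ‖z‖^2 = (z * (starRingEnd ℂ) z).re := by
  rw [Complex.mul_conj]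
  simp [Complex.normSq_eq_norm_sq, ← Complex.ofReal_pow]

lemma hasDerivWithinAt_conj {f : ℝ → ℂ} {f' : ℂ} {s : Set ℝ} {x : ℝ}
    (hf : HasDerivWithinAt f f' s x) :
    HasDerivWithinAt (fun ξ => (starRingEnd ℂ) (f ξ)) ((starRingEnd ℂ) f') s x := by
  have := (Complex.conjCLE.toContinuousLinearMap.hasFDerivAt (x := f x)).comp_hasDerivWithinAt x hf
  simpa [Function.comp_def] using this

lemma hasDerivAt_conj {f : ℝ → ℂ} {f' : ℂ} {x : ℝ} (hf : HasDerivAt f f' x) :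
    HasDerivAt (fun ξ => (starRingEnd ℂ) (f ξ)) ((starRingEnd ℂ) f') x := by
  have := (Complex.conjCLE.toContinuousLinearMap.hasFDerivAt (x := f x)).comp_hasDerivAt x hf
  simpa [Function.comp_def] using this

lemma hasDerivWithinAt_re {f : ℝ → ℂ} {f' : ℂ} {s : Set ℝ} {x : ℝ}
    (hf : HasDerivWithinAt f f' s x) :
    HasDerivWithinAt (fun ξ => (f ξ).re) f'.re s x := by
  have := (Complex.reCLM.hasFDerivAt (x := f x)).comp_hasDerivWithinAt x hf
  simpa [Function.comp_def] using this

lemma hasDerivAt_re {f : ℝ → ℂ} {f' : ℂ} {x : ℝ} (hf : HasDerivAt f f' x) :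
    HasDerivAt (fun ξ => (f ξ).re) f'.re x := by
  have := (Complex.reCLM.hasFDerivAt (x := f x)).comp_hasDerivAt x hf
  simpa [Function.comp_def] using this

/-- derivative of the symmetric pair `f ḡ + g f̄` (re). -/
lemma hasDerivWithinAt_pair {f g : ℝ → ℂ} {f' g' : ℂ} {s : Set ℝ} {x : ℝ}
    (hf : HasDerivWithinAt f f' s x) (hg : HasDerivWithinAt g g' s x) :
    HasDerivWithinAt
      (fun ξ => (f ξ * (starRingEnd ℂ) (g ξ) + g ξ * (starRingEnd ℂ) (f ξ)).re)
      ((f' * (starRingEnd ℂ) (g x) + f x * (starRingEnd ℂ) g'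
        + (g' * (starRingEnd ℂ) (f x) + g x * (starRingEnd ℂ) f')).re) s x := by
  exact hasDerivWithinAt_re (((hf.mul (hasDerivWithinAt_conj hg))).add
    ((hg.mul (hasDerivWithinAt_conj hf))))

/-- t-derivative of `‖f‖²`. -/
lemma hasDerivAt_normsq {f : ℝ → ℂ} {f' : ℂ} {x : ℝ} (hf : HasDerivAt f f' x) :
    HasDerivAt (fun ξ => ‖f ξ‖^2)
      ((f' * (starRingEnd ℂ) (f x) + f x * (starRingEnd ℂ) f').re) x := by
  have h := hasDerivAt_re ((hf.mul (hasDerivAt_conj hf)))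
  refine HasDerivAt.congr_deriv (h.congr_of_eventuallyEq ?_) rfl
  exact Filter.Eventually.of_forall (fun ξ => (norm_sq_re (f ξ)))
end helpers

/-- Schwarz: the spatial derivative of `ft` within the strip is `fxt`. -/
lemma schwarz_aux {f fx ft fxx ftt fxt : ℝ → ℝ → ℂ} {a b : ℝ} (hab : a ≤ b)
    (hf : IsC2On f fx ft fxx ftt fxt a b) {t : ℝ} (ht : 0 < t) :
    ∀ x ∈ Icc a b, HasDerivWithinAt (fun ξ => ft ξ t) (fxt x t) (Icc a b) x := by
  obtain ⟨hD, hc, hcx, hct, hcxx, hctt, hcxt⟩ := hf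
  -- FTC in x
  have ftc : ∀ s ∈ Ici (0:ℝ), ∀ x ∈ Icc a b,
      ∫ ξ in a..x, fx ξ s = f x s - f a s := by
    intro s hs x hx
    refine intervalIntegral.integral_eq_sub_of_hasDerivAt (f := fun ξ => f ξ s) (f' := fun ξ => fx ξ s) (fun ξ hξ => ?_) ?_
    · exact (hD ξ (by rw [uIcc_of_le hx.1] at hξ; exact ⟨hξ.1, hξ.2.trans hx.2⟩) s hs).1
    · refine ContinuousOn.intervalIntegrable ?_
      rw [uIcc_of_le hx.1]
      exact (contOn_slice hs hcx).mono (Icc_subset_Icc_right hx.2)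
  -- identity for ft
  have hft : ∀ x ∈ Icc a b, ft x t - ft a t = ∫ ξ in a..x, fxt ξ t := by
    intro x hx
    have h1 : HasDerivAt (fun s => ∫ ξ in a..x, fx ξ s) (∫ ξ in a..x, fxt ξ t) t := by
      refine hasDerivAt_param_integral hx.1 ht ?_ ?_ ?_
      · intro ξ hξ s hs
        exact (hD ξ ⟨hξ.1, hξ.2.trans hx.2⟩ s (mem_Ici.2 (le_of_lt hs))).2.2.2.2
      · exact hcx.mono (Set.prod_mono (Icc_subset_Icc_right hx.2) subset_rfl)
      · exact hcxt.mono (Set.prod_mono (Icc_subset_Icc_right hx.2) subset_rfl)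
    have h2 : HasDerivAt (fun s => f x s - f a s) (ft x t - ft a t) t :=
      ((hD x hx t ht.le).2.1).sub ((hD a (left_mem_Icc.2 hab) t ht.le).2.1)
    have heq : (fun s => ∫ ξ in a..x, fx ξ s) =ᶠ[nhds t] (fun s => f x s - f a s) := by
      filter_upwards [Ioi_mem_nhds ht] with s hs
      exact ftc s (mem_Ici.2 (le_of_lt hs)) x hx
    exact (h2.unique (h1.congr_of_eventuallyEq heq.symm))
  -- FTC-1 for the integral of fxt
  intro x hx
  haveI : Fact (x ∈ Icc a b) := ⟨hx⟩
  have hint : IntervalIntegrable (fun ξ => fxt ξ t) volume a x :=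
    ContinuousOn.intervalIntegrable (by
      rw [uIcc_of_le hx.1]
      exact (contOn_slice ht.le hcxt).mono (Icc_subset_Icc_right hx.2))
  have hmeas : StronglyMeasurableAtFilter (fun ξ => fxt ξ t) (nhdsWithin x (Icc a b)) volume :=
    ContinuousOn.stronglyMeasurableAtFilter_nhdsWithin (contOn_slice ht.le hcxt) measurableSet_Icc x
  have hcw : ContinuousWithinAt (fun ξ => fxt ξ t) (Icc a b) x :=
    (contOn_slice ht.le hcxt) x hx
  have hder : HasDerivWithinAt (fun x' => ∫ ξ in a..x', fxt ξ t) (fxt x t) (Icc a b) x :=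
    intervalIntegral.integral_hasDerivWithinAt_right hint hmeas hcw
  have : HasDerivWithinAt (fun x' => ft x' t - ft a t) (fxt x t) (Icc a b) x := by
    refine hder.congr (fun x' hx' => (hft x' hx')) ((hft x hx))
  simpa using this.add_const (ft a t)

section segments
open Complex

lemma normsq_eq (z : ℂ) : ‖z‖^2 = z.re^2 + z.im^2 := by
  rw [norm_sq_re]; simp [Complex.mul_re]; ring

lemma contOn_conj {f : ℝ → ℝ → ℂ} {S : Set (ℝ×ℝ)}
    (hf : ContinuousOn (fun q : ℝ×ℝ => f q.1 q.2) S) :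
    ContinuousOn (fun q : ℝ×ℝ => (starRingEnd ℂ) (f q.1 q.2)) S :=
  Complex.continuous_conj.comp_continuousOn hf

lemma contOn_re {f : ℝ → ℝ → ℂ} {S : Set (ℝ×ℝ)}
    (hf : ContinuousOn (fun q : ℝ×ℝ => f q.1 q.2) S) :
    ContinuousOn (fun q : ℝ×ℝ => (f q.1 q.2).re) S :=
  Complex.continuous_re.comp_continuousOn hf

lemma contOn_pair {f g : ℝ → ℝ → ℂ} {S : Set (ℝ×ℝ)}
    (hf : ContinuousOn (fun q : ℝ×ℝ => f q.1 q.2) S)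
    (hg : ContinuousOn (fun q : ℝ×ℝ => g q.1 q.2) S) :
    ContinuousOn (fun q : ℝ×ℝ =>
      (f q.1 q.2 * (starRingEnd ℂ) (g q.1 q.2)
        + g q.1 q.2 * (starRingEnd ℂ) (f q.1 q.2)).re) S :=
  Complex.continuous_re.comp_continuousOn
    ((hf.mul (Complex.continuous_conj.comp_continuousOn hg)).add
      (hg.mul (Complex.continuous_conj.comp_continuousOn hf)))

lemma contOn_normsq {f : ℝ → ℝ → ℂ} {S : Set (ℝ×ℝ)}
    (hf : ContinuousOn (fun q : ℝ×ℝ => f q.1 q.2) S) :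
    ContinuousOn (fun q : ℝ×ℝ => ‖f q.1 q.2‖^2) S :=
  (continuous_norm.comp_continuousOn hf).pow 2

/-- Energy derivative on an elastic (wave equation) segment. -/
lemma elastic_segment {a b c t : ℝ} (hab : a < b) (ht : 0 < t)
    {u ux ut uxx utt uxt : ℝ → ℝ → ℂ}
    (hu : IsC2On u ux ut uxx utt uxt a b)
    (hueq : ∀ x ∈ Icc a b, utt x t = (c:ℂ) * uxx x t) :
    HasDerivAt (fun s => ∫ x in a..b, (‖ut x s‖^2 + c * ‖ux x s‖^2))
      (c * (ux b t * (starRingEnd ℂ) (ut b t) + ut b t * (starRingEnd ℂ) (ux b t)).re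
       - c * (ux a t * (starRingEnd ℂ) (ut a t) + ut a t * (starRingEnd ℂ) (ux a t)).re) t := by
  obtain ⟨hD, hc, hcx, hct, hcxx, hctt, hcxt⟩ := hu
  set g' : ℝ → ℝ → ℝ := fun x s =>
    (utt x s * (starRingEnd ℂ) (ut x s) + ut x s * (starRingEnd ℂ) (utt x s)).re
    + c * (uxt x s * (starRingEnd ℂ) (ux x s) + ux x s * (starRingEnd ℂ) (uxt x s)).re
    with hg'def
  have step1 : HasDerivAt (fun s => ∫ x in a..b, (‖ut x s‖^2 + c * ‖ux x s‖^2))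
      (∫ x in a..b, g' x t) t := by
    refine hasDerivAt_param_integral (g := fun x s => (‖ut x s‖^2 + c * ‖ux x s‖^2))
      (g' := g') hab.le ht ?_ ?_ ?_
    · intro x hx s hs
      have h1 := hasDerivAt_normsq (hD x hx s (mem_Ici.2 (le_of_lt hs))).2.2.2.1
      have h2 := (hasDerivAt_normsq (hD x hx s (mem_Ici.2 (le_of_lt hs))).2.2.2.2).const_mul c
      exact h1.add h2
    · exact (contOn_normsq hct).add (continuousOn_const.mul (contOn_normsq hcx))
    · exact (contOn_pair hctt hct).add (continuousOn_const.mul (contOn_pair hcxt hcx))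
  have step2 : (∫ x in a..b, g' x t)
      = c * (ux b t * (starRingEnd ℂ) (ut b t) + ut b t * (starRingEnd ℂ) (ux b t)).re
       - c * (ux a t * (starRingEnd ℂ) (ut a t) + ut a t * (starRingEnd ℂ) (ux a t)).re := by
    have hS : ∀ x ∈ Icc a b, HasDerivWithinAt (fun ξ => ut ξ t) (uxt x t) (Icc a b) x :=
      schwarz_aux hab.le ⟨hD, hc, hcx, hct, hcxx, hctt, hcxt⟩ ht
    refine intervalIntegral.integral_eq_sub_of_hasDeriv_right_of_le
      (f := fun x => c * (ux x t * (starRingEnd ℂ) (ut x t)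
        + ut x t * (starRingEnd ℂ) (ux x t)).re)
      (f' := fun x => g' x t) hab.le ?_ ?_ ?_
    · exact continuousOn_const.mul (contOn_slice
        (X := fun x s => (ux x s * (starRingEnd ℂ) (ut x s)
          + ut x s * (starRingEnd ℂ) (ux x s)).re) ht.le (contOn_pair hcx hct))
    · intro x hx
      have hxm : x ∈ Icc a b := Ioo_subset_Icc_self hx
      have hux : HasDerivWithinAt (fun ξ => ux ξ t) (uxx x t) (Icc a b) x :=
        ((hD x hxm t ht.le).2.2.1).hasDerivWithinAt
      have hpair := (hasDerivWithinAt_pair hux (hS x hxm)).const_mul c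
      have hmem : Icc a b ∈ nhdsWithin x (Ioi x) := Icc_mem_nhdsGT_of_mem ⟨hxm.1, hx.2⟩
      refine (hpair.mono_of_mem_nhdsWithin hmem).congr_deriv ?_
      -- value identity via PDE
      have e := hueq x hxm
      have ere := congrArg Complex.re e
      have eim := congrArg Complex.im e
      simp only [Complex.mul_re, Complex.mul_im, Complex.ofReal_re, Complex.ofReal_im] at ere eim
      simp only [hg'def, Complex.add_re, Complex.mul_re, Complex.mul_im, Complex.add_im,
        Complex.conj_re, Complex.conj_im]
      linear_combination (-2*(ut x t).re) * ere + (-2*(ut x t).im) * eim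
    · refine ContinuousOn.intervalIntegrable ?_
      rw [uIcc_of_le hab.le]
      exact (contOn_slice (X := g') ht.le ((contOn_pair hctt hct).add
        (continuousOn_const.mul (contOn_pair hcxt hcx))))
  rw [← step2]; exact step1
end segments

section piezo
open Complex

set_option maxHeartbeats 2000000 in
/-- Energy derivative on the piezoelectric segment. -/
lemma piezo_segment {a b t ρ α β γ μ : ℝ} (hab : a < b) (ht : 0 < t)
    {d₂ : ℝ → ℝ} (hd₂c : ContinuousOn d₂ (Icc a b))
    {v vx vt vxx vtt vxt p px pt pxx ptt pxt : ℝ → ℝ → ℂ}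
    (hv : IsC2On v vx vt vxx vtt vxt a b)
    (hp : IsC2On p px pt pxx ptt pxt a b)
    (hveq : ∀ x ∈ Icc a b,
      (ρ : ℂ) * vtt x t - (α : ℂ) * vxx x t + ((γ * β : ℝ) : ℂ) * pxx x t +
        (d₂ x : ℂ) * vt x t = 0)
    (hpeq : ∀ x ∈ Icc a b,
      (μ : ℂ) * ptt x t - (β : ℂ) * pxx x t + ((γ * β : ℝ) : ℂ) * vxx x t = 0) :
    HasDerivAt (fun s => ∫ x in a..b,
        (ρ * ‖vt x s‖ ^ 2 + (α - γ ^ 2 * β) * ‖vx x s‖ ^ 2 +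
          μ * ‖pt x s‖ ^ 2 + β * ‖(γ : ℂ) * vx x s - px x s‖ ^ 2))
      ((((α:ℂ) * vx b t - ((γ*β:ℝ):ℂ) * px b t) * (starRingEnd ℂ) (vt b t)
          + vt b t * (starRingEnd ℂ) ((α:ℂ) * vx b t - ((γ*β:ℝ):ℂ) * px b t)).re
        + (((β:ℂ) * px b t - ((γ*β:ℝ):ℂ) * vx b t) * (starRingEnd ℂ) (pt b t)
          + pt b t * (starRingEnd ℂ) ((β:ℂ) * px b t - ((γ*β:ℝ):ℂ) * vx b t)).re
        - ((((α:ℂ) * vx a t - ((γ*β:ℝ):ℂ) * px a t) * (starRingEnd ℂ) (vt a t)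
          + vt a t * (starRingEnd ℂ) ((α:ℂ) * vx a t - ((γ*β:ℝ):ℂ) * px a t)).re
        + (((β:ℂ) * px a t - ((γ*β:ℝ):ℂ) * vx a t) * (starRingEnd ℂ) (pt a t)
          + pt a t * (starRingEnd ℂ) ((β:ℂ) * px a t - ((γ*β:ℝ):ℂ) * vx a t)).re)
        - 2 * ∫ x in a..b, d₂ x * ‖vt x t‖ ^ 2) t := by
  obtain ⟨hDv, hvc, hvcx, hvct, hvcxx, hvctt, hvcxt⟩ := hv
  obtain ⟨hDp, hpc, hpcx, hpct, hpcxx, hpctt, hpcxt⟩ := hp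
  set g' : ℝ → ℝ → ℝ := fun x s =>
    ρ * (vtt x s * (starRingEnd ℂ) (vt x s) + vt x s * (starRingEnd ℂ) (vtt x s)).re
    + (α - γ ^ 2 * β) *
        (vxt x s * (starRingEnd ℂ) (vx x s) + vx x s * (starRingEnd ℂ) (vxt x s)).re
    + μ * (ptt x s * (starRingEnd ℂ) (pt x s) + pt x s * (starRingEnd ℂ) (ptt x s)).re
    + β * (((γ:ℂ) * vxt x s - pxt x s) * (starRingEnd ℂ) ((γ:ℂ) * vx x s - px x s)
        + ((γ:ℂ) * vx x s - px x s) * (starRingEnd ℂ) ((γ:ℂ) * vxt x s - pxt x s)).re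
    with hg'def
  have hcd : ContinuousOn (fun q : ℝ × ℝ => (γ:ℂ) * vx q.1 q.2 - px q.1 q.2)
      (Icc a b ×ˢ Ici 0) := (continuousOn_const.mul hvcx).sub hpcx
  have hcdt : ContinuousOn (fun q : ℝ × ℝ => (γ:ℂ) * vxt q.1 q.2 - pxt q.1 q.2)
      (Icc a b ×ˢ Ici 0) := (continuousOn_const.mul hvcxt).sub hpcxt
  have step1 : HasDerivAt (fun s => ∫ x in a..b,
        (ρ * ‖vt x s‖ ^ 2 + (α - γ ^ 2 * β) * ‖vx x s‖ ^ 2 +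
          μ * ‖pt x s‖ ^ 2 + β * ‖(γ : ℂ) * vx x s - px x s‖ ^ 2))
      (∫ x in a..b, g' x t) t := by
    refine hasDerivAt_param_integral
      (g := fun x s => (ρ * ‖vt x s‖ ^ 2 + (α - γ ^ 2 * β) * ‖vx x s‖ ^ 2 +
        μ * ‖pt x s‖ ^ 2 + β * ‖(γ : ℂ) * vx x s - px x s‖ ^ 2))
      (g' := g') hab.le ht ?_ ?_ ?_
    · intro x hx s hs
      have h1 := (hasDerivAt_normsq (hDv x hx s (mem_Ici.2 (le_of_lt hs))).2.2.2.1).const_mul ρ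
      have h2 := (hasDerivAt_normsq (hDv x hx s (mem_Ici.2 (le_of_lt hs))).2.2.2.2).const_mul (α - γ^2*β)
      have h3 := (hasDerivAt_normsq (hDp x hx s (mem_Ici.2 (le_of_lt hs))).2.2.2.1).const_mul μ
      have h4 := (hasDerivAt_normsq
        (((hDv x hx s (mem_Ici.2 (le_of_lt hs))).2.2.2.2.const_mul (γ:ℂ)).sub
          (hDp x hx s (mem_Ici.2 (le_of_lt hs))).2.2.2.2)).const_mul β
      exact ((h1.add h2).add h3).add h4
    · exact (((continuousOn_const.mul (contOn_normsq hvct)).add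
          (continuousOn_const.mul (contOn_normsq hvcx))).add
          (continuousOn_const.mul (contOn_normsq hpct))).add
          (continuousOn_const.mul (contOn_normsq (f := fun x s => (γ:ℂ) * vx x s - px x s) hcd))
    · exact (((continuousOn_const.mul (contOn_pair hvctt hvct)).add
          (continuousOn_const.mul (contOn_pair hvcxt hvcx))).add
          (continuousOn_const.mul (contOn_pair hpctt hpct))).add
          (continuousOn_const.mul (contOn_pair (f := fun x s => (γ:ℂ) * vxt x s - pxt x s)
            (g := fun x s => (γ:ℂ) * vx x s - px x s) hcdt hcd))
  -- boundary potential
  set H : ℝ → ℝ := fun x =>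
    (((α:ℂ) * vx x t - ((γ*β:ℝ):ℂ) * px x t) * (starRingEnd ℂ) (vt x t)
      + vt x t * (starRingEnd ℂ) ((α:ℂ) * vx x t - ((γ*β:ℝ):ℂ) * px x t)).re
    + (((β:ℂ) * px x t - ((γ*β:ℝ):ℂ) * vx x t) * (starRingEnd ℂ) (pt x t)
      + pt x t * (starRingEnd ℂ) ((β:ℂ) * px x t - ((γ*β:ℝ):ℂ) * vx x t)).re with hHdef
  have hg'cont : ContinuousOn (fun x => g' x t) (Icc a b) := by
    refine contOn_slice (X := g') ht.le ?_
    exact (((continuousOn_const.mul (contOn_pair hvctt hvct)).add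
          (continuousOn_const.mul (contOn_pair hvcxt hvcx))).add
          (continuousOn_const.mul (contOn_pair hpctt hpct))).add
          (continuousOn_const.mul (contOn_pair (f := fun x s => (γ:ℂ) * vxt x s - pxt x s)
            (g := fun x s => (γ:ℂ) * vx x s - px x s) hcdt hcd))
  have hdcont : ContinuousOn (fun x => 2 * (d₂ x * ‖vt x t‖^2)) (Icc a b) :=
    continuousOn_const.mul (hd₂c.mul
      (contOn_slice (X := fun x s => ‖vt x s‖^2) ht.le (contOn_normsq hvct)))
  have int1 : IntervalIntegrable (fun x => g' x t) MeasureTheory.volume a b :=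
    ContinuousOn.intervalIntegrable (by rw [uIcc_of_le hab.le]; exact hg'cont)
  have int2 : IntervalIntegrable (fun x => 2 * (d₂ x * ‖vt x t‖^2)) MeasureTheory.volume a b :=
    ContinuousOn.intervalIntegrable (by rw [uIcc_of_le hab.le]; exact hdcont)
  have step2 : (∫ x in a..b, (g' x t + 2 * (d₂ x * ‖vt x t‖^2))) = H b - H a := by
    have hSv : ∀ x ∈ Icc a b, HasDerivWithinAt (fun ξ => vt ξ t) (vxt x t) (Icc a b) x :=
      schwarz_aux hab.le ⟨hDv, hvc, hvcx, hvct, hvcxx, hvctt, hvcxt⟩ ht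
    have hSp : ∀ x ∈ Icc a b, HasDerivWithinAt (fun ξ => pt ξ t) (pxt x t) (Icc a b) x :=
      schwarz_aux hab.le ⟨hDp, hpc, hpcx, hpct, hpcxx, hpctt, hpcxt⟩ ht
    refine intervalIntegral.integral_eq_sub_of_hasDeriv_right_of_le
      (f := H) (f' := fun x => g' x t + 2 * (d₂ x * ‖vt x t‖^2)) hab.le ?_ ?_ ?_
    · rw [hHdef]
      refine ContinuousOn.add ?_ ?_
      · exact contOn_slice (X := fun x s =>
          (((α:ℂ) * vx x s - ((γ*β:ℝ):ℂ) * px x s) * (starRingEnd ℂ) (vt x s)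
            + vt x s * (starRingEnd ℂ) ((α:ℂ) * vx x s - ((γ*β:ℝ):ℂ) * px x s)).re) ht.le
          (contOn_pair (f := fun x s => (α:ℂ) * vx x s - ((γ*β:ℝ):ℂ) * px x s)
            (g := vt) ((continuousOn_const.mul hvcx).sub (continuousOn_const.mul hpcx)) hvct)
      · exact contOn_slice (X := fun x s =>
          (((β:ℂ) * px x s - ((γ*β:ℝ):ℂ) * vx x s) * (starRingEnd ℂ) (pt x s)
            + pt x s * (starRingEnd ℂ) ((β:ℂ) * px x s - ((γ*β:ℝ):ℂ) * vx x s)).re) ht.le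
          (contOn_pair (f := fun x s => (β:ℂ) * px x s - ((γ*β:ℝ):ℂ) * vx x s)
            (g := pt) ((continuousOn_const.mul hpcx).sub (continuousOn_const.mul hvcx)) hpct)
    · intro x hx
      have hxm : x ∈ Icc a b := Ioo_subset_Icc_self hx
      have hA : HasDerivWithinAt (fun ξ => (α:ℂ) * vx ξ t - ((γ*β:ℝ):ℂ) * px ξ t)
          ((α:ℂ) * vxx x t - ((γ*β:ℝ):ℂ) * pxx x t) (Icc a b) x :=
        (((hDv x hxm t ht.le).2.2.1).hasDerivWithinAt.const_mul ((α:ℂ))).sub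
          (((hDp x hxm t ht.le).2.2.1).hasDerivWithinAt.const_mul (((γ*β:ℝ):ℂ)))
      have hB : HasDerivWithinAt (fun ξ => (β:ℂ) * px ξ t - ((γ*β:ℝ):ℂ) * vx ξ t)
          ((β:ℂ) * pxx x t - ((γ*β:ℝ):ℂ) * vxx x t) (Icc a b) x :=
        (((hDp x hxm t ht.le).2.2.1).hasDerivWithinAt.const_mul ((β:ℂ))).sub
          (((hDv x hxm t ht.le).2.2.1).hasDerivWithinAt.const_mul (((γ*β:ℝ):ℂ)))
      have hpairA := hasDerivWithinAt_pair hA (hSv x hxm)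
      have hpairB := hasDerivWithinAt_pair hB (hSp x hxm)
      have hmem : Icc a b ∈ nhdsWithin x (Ioi x) := Icc_mem_nhdsGT_of_mem ⟨hxm.1, hx.2⟩
      refine ((hpairA.add hpairB).mono_of_mem_nhdsWithin hmem).congr_deriv ?_
      have e1 := hveq x hxm
      have e2 := hpeq x hxm
      have e1re := congrArg Complex.re e1
      have e1im := congrArg Complex.im e1
      have e2re := congrArg Complex.re e2
      have e2im := congrArg Complex.im e2
      simp only [Complex.add_re, Complex.add_im, Complex.sub_re, Complex.sub_im,
        Complex.mul_re, Complex.mul_im, Complex.ofReal_re, Complex.ofReal_im,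
        Complex.zero_re, Complex.zero_im] at e1re e1im e2re e2im
      simp only [hg'def, map_sub, map_mul, Complex.conj_ofReal, normsq_eq,
        Complex.add_re, Complex.add_im, Complex.sub_re, Complex.sub_im,
        Complex.mul_re, Complex.mul_im, Complex.ofReal_re, Complex.ofReal_im,
        Complex.conj_re, Complex.conj_im]
      linear_combination (-2*(vt x t).re) * e1re + (-2*(vt x t).im) * e1im
        + (-2*(pt x t).re) * e2re + (-2*(pt x t).im) * e2im
    · exact int1.add int2
  have hsplit : (∫ x in a..b, g' x t)
      = H b - H a - 2 * ∫ x in a..b, d₂ x * ‖vt x t‖^2 := by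
    have := intervalIntegral.integral_add int1 int2
    rw [step2] at this
    have h2 : (∫ x in a..b, 2 * (d₂ x * ‖vt x t‖^2))
        = 2 * ∫ x in a..b, d₂ x * ‖vt x t‖^2 := intervalIntegral.integral_const_mul 2 _
    linarith [this, h2]
  simp only [hHdef] at hsplit
  rw [hsplit] at step1
  exact step1
end piezo

set_option maxHeartbeats 1000000 in
/-- (Lemma 2.1) Energy dissipation identity for the
serially-connected Elastic–Piezoelectric–Elastic transmission system with a
local viscous damping `d₂` acting only on the piezoelectric middle layer:
`E'(t) = -∫_{l₁}^{l₂} d₂(x) |v_t(x,t)|² dx` for every `t > 0`. -/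
theorem stmt0 (l₁ l₂ L c₁ c₂ ρ α β γ μ : ℝ)
    (hl₁ : 0 < l₁) (hl₁₂ : l₁ < l₂) (hl₂L : l₂ < L)
    (hc₁ : 0 < c₁) (hc₂ : 0 < c₂) (hρ : 0 < ρ) (hα : 0 < α) (hβ : 0 < β)
    (hγ : 0 < γ) (hμ : 0 < μ) (hα₁ : 0 < α - γ ^ 2 * β)
    (d₂ : ℝ → ℝ) (hd₂c : ContinuousOn d₂ (Icc l₁ l₂))
    (hd₂0 : ∀ x ∈ Icc l₁ l₂, 0 ≤ d₂ x)
    (u ux ut uxx utt uxt : ℝ → ℝ → ℂ)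
    (v vx vt vxx vtt vxt : ℝ → ℝ → ℂ)
    (p px pt pxx ptt pxt : ℝ → ℝ → ℂ)
    (y yx yt yxx ytt yxt : ℝ → ℝ → ℂ)
    (hu : IsC2On u ux ut uxx utt uxt 0 l₁)
    (hv : IsC2On v vx vt vxx vtt vxt l₁ l₂)
    (hp : IsC2On p px pt pxx ptt pxt l₁ l₂)
    (hy : IsC2On y yx yt yxx ytt yxt l₂ L)
    -- the four PDEs
    (hueq : ∀ t ∈ Ici (0 : ℝ), ∀ x ∈ Icc (0 : ℝ) l₁,
      utt x t = (c₁ : ℂ) * uxx x t)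
    (hveq : ∀ t ∈ Ici (0 : ℝ), ∀ x ∈ Icc l₁ l₂,
      (ρ : ℂ) * vtt x t - (α : ℂ) * vxx x t + ((γ * β : ℝ) : ℂ) * pxx x t +
        (d₂ x : ℂ) * vt x t = 0)
    (hpeq : ∀ t ∈ Ici (0 : ℝ), ∀ x ∈ Icc l₁ l₂,
      (μ : ℂ) * ptt x t - (β : ℂ) * pxx x t + ((γ * β : ℝ) : ℂ) * vxx x t = 0)
    (hyeq : ∀ t ∈ Ici (0 : ℝ), ∀ x ∈ Icc l₂ L,
      ytt x t = (c₂ : ℂ) * yxx x t)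
    -- boundary conditions
    (hbc0 : ∀ t ∈ Ici (0 : ℝ), u 0 t = 0)
    (hbcL : ∀ t ∈ Ici (0 : ℝ), y L t = 0)
    -- continuity conditions
    (hct1 : ∀ t ∈ Ici (0 : ℝ), v l₁ t = u l₁ t)
    (hct2 : ∀ t ∈ Ici (0 : ℝ), v l₂ t = y l₂ t)
    -- transmission conditions
    (htr1 : ∀ t ∈ Ici (0 : ℝ),
      (α : ℂ) * vx l₁ t - ((γ * β : ℝ) : ℂ) * px l₁ t = (c₁ : ℂ) * ux l₁ t)
    (htr2 : ∀ t ∈ Ici (0 : ℝ),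
      (α : ℂ) * vx l₂ t - ((γ * β : ℝ) : ℂ) * px l₂ t = (c₂ : ℂ) * yx l₂ t)
    (htr3 : ∀ t ∈ Ici (0 : ℝ), px l₁ t = (γ : ℂ) * vx l₁ t)
    (htr4 : ∀ t ∈ Ici (0 : ℝ), px l₂ t = (γ : ℂ) * vx l₂ t) :
    ∀ t > (0 : ℝ), HasDerivAt
      (fun s : ℝ =>
        (1 / 2) * (∫ x in (0 : ℝ)..l₁, (‖ut x s‖ ^ 2 + c₁ * ‖ux x s‖ ^ 2)) +
        (1 / 2) * (∫ x in l₁..l₂,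
          (ρ * ‖vt x s‖ ^ 2 + (α - γ ^ 2 * β) * ‖vx x s‖ ^ 2 +
            μ * ‖pt x s‖ ^ 2 + β * ‖(γ : ℂ) * vx x s - px x s‖ ^ 2)) +
        (1 / 2) * (∫ x in l₂..L, (‖yt x s‖ ^ 2 + c₂ * ‖yx x s‖ ^ 2)))
      (-(∫ x in l₁..l₂, d₂ x * ‖vt x t‖ ^ 2)) t := by
  intro t ht
  have h1 := elastic_segment hl₁ ht hu (hueq t ht.le)
  have h2 := piezo_segment hl₁₂ ht hd₂c hv hp (hveq t ht.le) (hpeq t ht.le)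
  have h3 := elastic_segment hl₂L ht hy (hyeq t ht.le)
  have htot := (((h1.const_mul (1/2 : ℝ)).add (h2.const_mul (1/2 : ℝ))).add
    (h3.const_mul (1/2 : ℝ)))
  -- boundary time-derivative facts
  have hut0 : ut 0 t = 0 := by
    have hd := (hu.1 0 (left_mem_Icc.2 hl₁.le) t ht.le).2.1
    have heq : (fun s => u 0 s) =ᶠ[nhds t] (fun _ => (0:ℂ)) := by
      filter_upwards [Ioi_mem_nhds ht] with s hs
      exact hbc0 s (mem_Ici.2 (le_of_lt hs))
    exact (hd.congr_of_eventuallyEq heq.symm).unique (hasDerivAt_const t 0)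
  have hytL : yt L t = 0 := by
    have hd := (hy.1 L (right_mem_Icc.2 hl₂L.le) t ht.le).2.1
    have heq : (fun s => y L s) =ᶠ[nhds t] (fun _ => (0:ℂ)) := by
      filter_upwards [Ioi_mem_nhds ht] with s hs
      exact hbcL s (mem_Ici.2 (le_of_lt hs))
    exact (hd.congr_of_eventuallyEq heq.symm).unique (hasDerivAt_const t 0)
  have hvt1 : vt l₁ t = ut l₁ t := by
    have hd1 := (hv.1 l₁ (left_mem_Icc.2 hl₁₂.le) t ht.le).2.1
    have hd2 := (hu.1 l₁ (right_mem_Icc.2 hl₁.le) t ht.le).2.1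
    have heq : (fun s => v l₁ s) =ᶠ[nhds t] (fun s => u l₁ s) := by
      filter_upwards [Ioi_mem_nhds ht] with s hs
      exact hct1 s (mem_Ici.2 (le_of_lt hs))
    exact hd1.unique (hd2.congr_of_eventuallyEq heq)
  have hvt2 : vt l₂ t = yt l₂ t := by
    have hd1 := (hv.1 l₂ (right_mem_Icc.2 hl₁₂.le) t ht.le).2.1
    have hd2 := (hy.1 l₂ (left_mem_Icc.2 hl₂L.le) t ht.le).2.1
    have heq : (fun s => v l₂ s) =ᶠ[nhds t] (fun s => y l₂ s) := by
      filter_upwards [Ioi_mem_nhds ht] with s hs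
      exact hct2 s (mem_Ici.2 (le_of_lt hs))
    exact hd1.unique (hd2.congr_of_eventuallyEq heq)
  have hB1 := htr1 t ht.le
  have hB2 := htr2 t ht.le
  have hZ1 : (β:ℂ) * px l₁ t - ((γ*β:ℝ):ℂ) * vx l₁ t = 0 := by
    rw [htr3 t ht.le]; push_cast; ring
  have hZ2 : (β:ℂ) * px l₂ t - ((γ*β:ℝ):ℂ) * vx l₂ t = 0 := by
    rw [htr4 t ht.le]; push_cast; ring
  have hVal : 1/2 * (c₁ * (ux l₁ t * (starRingEnd ℂ) (ut l₁ t)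
        + ut l₁ t * (starRingEnd ℂ) (ux l₁ t)).re
       - c₁ * (ux 0 t * (starRingEnd ℂ) (ut 0 t) + ut 0 t * (starRingEnd ℂ) (ux 0 t)).re)
      + 1/2 * ((((α:ℂ) * vx l₂ t - ((γ*β:ℝ):ℂ) * px l₂ t) * (starRingEnd ℂ) (vt l₂ t)
          + vt l₂ t * (starRingEnd ℂ) ((α:ℂ) * vx l₂ t - ((γ*β:ℝ):ℂ) * px l₂ t)).re
        + (((β:ℂ) * px l₂ t - ((γ*β:ℝ):ℂ) * vx l₂ t) * (starRingEnd ℂ) (pt l₂ t)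
          + pt l₂ t * (starRingEnd ℂ) ((β:ℂ) * px l₂ t - ((γ*β:ℝ):ℂ) * vx l₂ t)).re
        - ((((α:ℂ) * vx l₁ t - ((γ*β:ℝ):ℂ) * px l₁ t) * (starRingEnd ℂ) (vt l₁ t)
          + vt l₁ t * (starRingEnd ℂ) ((α:ℂ) * vx l₁ t - ((γ*β:ℝ):ℂ) * px l₁ t)).re
        + (((β:ℂ) * px l₁ t - ((γ*β:ℝ):ℂ) * vx l₁ t) * (starRingEnd ℂ) (pt l₁ t)
          + pt l₁ t * (starRingEnd ℂ) ((β:ℂ) * px l₁ t - ((γ*β:ℝ):ℂ) * vx l₁ t)).re)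
        - 2 * ∫ x in l₁..l₂, d₂ x * ‖vt x t‖ ^ 2)
      + 1/2 * (c₂ * (yx L t * (starRingEnd ℂ) (yt L t)
          + yt L t * (starRingEnd ℂ) (yx L t)).re
       - c₂ * (yx l₂ t * (starRingEnd ℂ) (yt l₂ t) + yt l₂ t * (starRingEnd ℂ) (yx l₂ t)).re)
      = -(∫ x in l₁..l₂, d₂ x * ‖vt x t‖ ^ 2) := by
    rw [hut0, hytL, hvt1, hvt2, hB1, hB2, hZ1, hZ2]
    simp only [map_mul, Complex.conj_ofReal, map_zero, mul_zero, zero_mul,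
      Complex.zero_re, Complex.add_re, Complex.mul_re, Complex.mul_im, Complex.ofReal_re,
      Complex.ofReal_im, Complex.conj_re, Complex.conj_im, add_zero, zero_add]
    ring
  rw [hVal] at htot
  exact htot
end

section
/- Let 0 < l₁ < l₂ be reals. Let u : ℝ → ℂ be continuously differentiable on [0, l₁] with u(0) = 0 and let v : ℝ → ℂ be continuously differentiable on [l₁, l₂] with v(l₁) = u(l₁). Then ∫_{l₁}^{l₂} |v(x)|² dx ≤ 2(l₂ − l₁) · max(l₁, l₂ − l₁) · ( ∫₀^{l₁} |u′(x)|² dx + ∫_{l₁}^{l₂} |v′(x)|² dx ). -/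
open Set

open MeasureTheory in
/-- Cauchy–Schwarz for a real nonnegative continuous function on `[a, b]`. -/
lemma stmt2.cs_real {a b : ℝ} (hab : a ≤ b) {g : ℝ → ℝ} (hg : ContinuousOn g (Icc a b))
    (hg0 : ∀ x ∈ Icc a b, 0 ≤ g x) :
    (∫ x in a..b, g x) ^ 2 ≤ (b - a) * ∫ x in a..b, g x ^ 2 := by
  set μ := volume.restrict (Ioc a b) with hμ
  have hfin : IsFiniteMeasure μ := by
    constructor
    rw [hμ, Measure.restrict_apply_univ, Real.volume_Ioc]
    exact ENNReal.ofReal_lt_top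
  obtain ⟨C, hC⟩ := (isCompact_Icc (a := a) (b := b)).exists_bound_of_continuousOn hg
  have hmeas : AEStronglyMeasurable g μ :=
    (hg.mono Ioc_subset_Icc_self).aestronglyMeasurable measurableSet_Ioc
  have hmem : MemLp g (ENNReal.ofReal 2) μ := by
    refine MemLp.of_bound hmeas C ?_
    refine (ae_restrict_iff' measurableSet_Ioc).2 (ae_of_all _ fun x hx => ?_)
    exact hC x (Ioc_subset_Icc_self hx)
  have hmem1 : MemLp (fun _ : ℝ => (1 : ℝ)) (ENNReal.ofReal 2) μ := memLp_const 1
  have hconj : (2 : ℝ).HolderConjugate 2 := by constructor <;> norm_num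
  have H := integral_mul_le_Lp_mul_Lq_of_nonneg (μ := μ) hconj
    (f := g) (g := fun _ => (1:ℝ))
    ((ae_restrict_iff' measurableSet_Ioc).2
      (ae_of_all _ fun x hx => hg0 x (Ioc_subset_Icc_self hx)))
    (ae_of_all _ fun _ => zero_le_one) hmem hmem1
  simp only [mul_one, Real.one_rpow] at H
  have hμuniv : ∫ _ : ℝ, (1:ℝ) ∂μ = b - a := by
    rw [integral_const, smul_eq_mul, mul_one, hμ, measureReal_def, Measure.restrict_apply_univ, Real.volume_Ioc,
      ENNReal.toReal_ofReal (by linarith)]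
  rw [hμuniv] at H
  have hrw : ∫ x, g x ^ (2:ℝ) ∂μ = ∫ x in a..b, g x ^ 2 := by
    rw [intervalIntegral.integral_of_le hab]
    exact integral_congr_ae (ae_of_all _ fun x => Real.rpow_two (g x))
  rw [hrw] at H
  have hI2 : 0 ≤ ∫ x in a..b, g x ^ 2 :=
    intervalIntegral.integral_nonneg hab fun x _ => sq_nonneg _
  have hI1 : 0 ≤ ∫ x, g x ∂μ := integral_nonneg_of_ae
    ((ae_restrict_iff' measurableSet_Ioc).2
      (ae_of_all _ fun x hx => hg0 x (Ioc_subset_Icc_self hx)))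
  have hab' : (0:ℝ) ≤ b - a := by linarith
  have key : (∫ x, g x ∂μ) ^ 2 ≤ ((∫ x in a..b, g x ^ 2) ^ (1/2:ℝ) * (b - a) ^ (1/2:ℝ)) ^ 2 :=
    pow_le_pow_left₀ hI1 H 2
  rw [mul_pow, ← Real.rpow_natCast (_ ^ (1/2:ℝ)) 2, ← Real.rpow_natCast ((b-a) ^ (1/2:ℝ)) 2,
    ← Real.rpow_mul hI2, ← Real.rpow_mul hab'] at key
  norm_num at key
  rw [intervalIntegral.integral_of_le hab]
  linarith [key]

open MeasureTheory in
/-- Cauchy–Schwarz for the interval integral of a continuous `ℂ`-valued function. -/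
lemma stmt2.cs_aux {a b : ℝ} (hab : a ≤ b) {f : ℝ → ℂ} (hf : ContinuousOn f (Icc a b)) :
    ‖∫ x in a..b, f x‖ ^ 2 ≤ (b - a) * ∫ x in a..b, ‖f x‖ ^ 2 := by
  have h1 : ‖∫ x in a..b, f x‖ ≤ ∫ x in a..b, ‖f x‖ :=
    intervalIntegral.norm_integral_le_integral_norm hab
  have h2 := stmt2.cs_real hab hf.norm (fun x _ => norm_nonneg _)
  calc ‖∫ x in a..b, f x‖ ^ 2 ≤ (∫ x in a..b, ‖f x‖) ^ 2 :=
        pow_le_pow_left₀ (norm_nonneg _) h1 2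
    _ ≤ (b - a) * ∫ x in a..b, ‖f x‖ ^ 2 := h2

/-- (Equation (2.9)) Poincaré-type estimate: the `L²` norm of
`v` on `[l₁, l₂]` is controlled by the `L²` norms of `u'` and `v'`, using
`u(0) = 0` and `v(l₁) = u(l₁)`. -/
theorem stmt2 (l₁ l₂ : ℝ) (hl₁ : 0 < l₁) (hl₁₂ : l₁ < l₂)
    (u u' v v' : ℝ → ℂ)
    (hu : ∀ x ∈ Icc (0 : ℝ) l₁, HasDerivAt u (u' x) x)
    (hu' : ContinuousOn u' (Icc 0 l₁))
    (hv : ∀ x ∈ Icc l₁ l₂, HasDerivAt v (v' x) x)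
    (hv' : ContinuousOn v' (Icc l₁ l₂))
    (hu0 : u 0 = 0) (hcont : v l₁ = u l₁) :
    (∫ x in l₁..l₂, ‖v x‖ ^ 2) ≤ 2 * (l₂ - l₁) * max l₁ (l₂ - l₁) *
      ((∫ x in (0 : ℝ)..l₁, ‖u' x‖ ^ 2) + ∫ x in l₁..l₂, ‖v' x‖ ^ 2) := by
  have h0l : (0:ℝ) ≤ l₁ := hl₁.le
  have hle : l₁ ≤ l₂ := hl₁₂.le
  set A := ∫ x in (0:ℝ)..l₁, ‖u' x‖ ^ 2 with hA
  set B := ∫ x in l₁..l₂, ‖v' x‖ ^ 2 with hB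
  have hAnn : 0 ≤ A := intervalIntegral.integral_nonneg h0l fun x _ => sq_nonneg _
  have hBnn : 0 ≤ B := intervalIntegral.integral_nonneg hle fun x _ => sq_nonneg _
  -- FTC for u on [0, l₁]
  have hu'int : IntervalIntegrable u' MeasureTheory.volume 0 l₁ :=
    ContinuousOn.intervalIntegrable (by rw [uIcc_of_le h0l]; exact hu')
  have hI₁ : (∫ x in (0:ℝ)..l₁, u' x) = u l₁ := by
    rw [intervalIntegral.integral_eq_sub_of_hasDerivAt
      (fun x hx => hu x (by rwa [uIcc_of_le h0l] at hx)) hu'int, hu0, sub_zero]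
  -- CS bound for the first integral
  have hCS₁ : ‖∫ x in (0:ℝ)..l₁, u' x‖ ^ 2 ≤ l₁ * A := by
    have := stmt2.cs_aux h0l hu'
    rwa [sub_zero] at this
  -- pointwise bound
  set M : ℝ := 2 * max l₁ (l₂ - l₁) * (A + B) with hM
  have hpt : ∀ x ∈ Icc l₁ l₂, ‖v x‖ ^ 2 ≤ M := by
    intro x hx
    have hsub : Icc l₁ x ⊆ Icc l₁ l₂ := Icc_subset_Icc le_rfl hx.2
    have hv'x : ContinuousOn v' (Icc l₁ x) := hv'.mono hsub
    have hv'int : IntervalIntegrable v' MeasureTheory.volume l₁ x :=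
      ContinuousOn.intervalIntegrable (by rw [uIcc_of_le hx.1]; exact hv'x)
    have hI₂ : (∫ t in l₁..x, v' t) = v x - v l₁ :=
      intervalIntegral.integral_eq_sub_of_hasDerivAt
        (fun t ht => hv t (hsub (by rwa [uIcc_of_le hx.1] at ht))) hv'int
    have hvx : v x = (∫ t in (0:ℝ)..l₁, u' t) + ∫ t in l₁..x, v' t := by
      rw [hI₁, hI₂, hcont]; ring
    have hCS₂ : ‖∫ t in l₁..x, v' t‖ ^ 2 ≤ (x - l₁) * ∫ t in l₁..x, ‖v' t‖ ^ 2 :=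
      stmt2.cs_aux hx.1 hv'x
    have hmono : (∫ t in l₁..x, ‖v' t‖ ^ 2) ≤ B := by
      refine intervalIntegral.integral_mono_interval le_rfl hx.1 hx.2
        (MeasureTheory.ae_of_all _ fun t => sq_nonneg _) ?_
      exact ContinuousOn.intervalIntegrable (by rw [uIcc_of_le hle]; exact hv'.norm.pow 2)
    have hIx : 0 ≤ ∫ t in l₁..x, ‖v' t‖ ^ 2 :=
      intervalIntegral.integral_nonneg hx.1 fun t _ => sq_nonneg _
    set a1 := ‖∫ t in (0:ℝ)..l₁, u' t‖
    set a2 := ‖∫ t in l₁..x, v' t‖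
    have htri : ‖v x‖ ≤ a1 + a2 := by rw [hvx]; exact norm_add_le _ _
    have hsq : ‖v x‖ ^ 2 ≤ (a1 + a2) ^ 2 := pow_le_pow_left₀ (norm_nonneg _) htri 2
    have h2 : (a1 + a2) ^ 2 ≤ 2 * (a1 ^ 2 + a2 ^ 2) := by nlinarith [sq_nonneg (a1 - a2)]
    have hCS₂' : a2 ^ 2 ≤ (x - l₁) * B := by
      refine hCS₂.trans ?_
      have : (0:ℝ) ≤ x - l₁ := by linarith [hx.1]
      nlinarith
    have hmax1 : l₁ ≤ max l₁ (l₂ - l₁) := le_max_left _ _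
    have hmax2 : x - l₁ ≤ max l₁ (l₂ - l₁) := le_trans (by linarith [hx.2]) (le_max_right _ _)
    have hfin : 2 * (l₁ * A + (x - l₁) * B) ≤ M := by
      rw [hM]
      have h1 : l₁ * A ≤ max l₁ (l₂ - l₁) * A := mul_le_mul_of_nonneg_right hmax1 hAnn
      have h2' : (x - l₁) * B ≤ max l₁ (l₂ - l₁) * B := mul_le_mul_of_nonneg_right hmax2 hBnn
      nlinarith
    nlinarith [hCS₁]
  -- integrate the pointwise bound
  have hvc : ContinuousOn v (Icc l₁ l₂) := fun x hx => (hv x hx).continuousAt.continuousWithinAt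
  have hvint : IntervalIntegrable (fun x => ‖v x‖ ^ 2) MeasureTheory.volume l₁ l₂ :=
    ContinuousOn.intervalIntegrable (by rw [uIcc_of_le hle]; exact hvc.norm.pow 2)
  have := intervalIntegral.integral_mono_on hle hvint intervalIntegrable_const hpt
  rw [intervalIntegral.integral_const, smul_eq_mul] at this
  calc (∫ x in l₁..l₂, ‖v x‖ ^ 2) ≤ (l₂ - l₁) * M := this
    _ = 2 * (l₂ - l₁) * max l₁ (l₂ - l₁) * (A + B) := by rw [hM]; ring
end

section
/- Let 0 < l₁ < l₂ < L and let c₁, c₂, ρ, α, β, γ, μ be positive reals with α₁ := α − γ²β > 0. Then there exist positive constants C₁ and C₂, depending only on l₁, l₂, L, c₁, c₂, ρ, α, β, γ, μ, such that for every tuple (u, u¹, v, z, p, q, y, y¹) where u is continuously differentiable on [0,l₁] with u(0)=0, v and p are continuously differentiable on [l₁,l₂], y is continuously differentiable on [l₂,L] with y(L)=0, u¹, z, q, y¹ are continuous on the respective intervals, and u(l₁)=v(l₁), y(l₂)=v(l₂), one has C₁‖U‖_s² ≤ ‖U‖_𝓗² ≤ C₂‖U‖_s², where ‖U‖_𝓗²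 = ∫₀^{l₁}(c₁|u′|² + |u¹|²) + ∫_{l₁}^{l₂}(α₁|v′|² + ρ|z|² + β|γ v′ − p′|² + μ|q|²) + ∫_{l₂}^{L}(c₂|y′|² + |y¹|²) and ‖U‖_s² = ∫₀^{l₁}|u′|² + ∫₀^{l₁}|u¹|² + ∫_{l₁}^{l₂}|v′|² + ∫_{l₁}^{l₂}|v|² + ∫_{l₁}^{l₂}|z|² + ∫_{l₁}^{l₂}|p′|² + ∫_{l₁}^{l₂}|q|² + ∫_{l₂}^{L}|y′|² + ∫_{l₂}^{L}|y¹|². -/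
open Set

/-- Interval Cauchy–Schwarz: `(∫ f)² ≤ (b-a) ∫ f²` for continuous `f`. -/
lemma cs_sq (a b : ℝ) (hab : a ≤ b) (f : ℝ → ℝ) (hf : ContinuousOn f (Icc a b)) :
    (∫ x in a..b, f x) ^ 2 ≤ (b - a) * ∫ x in a..b, f x ^ 2 := by
  rcases eq_or_lt_of_le hab with rfl | hlt
  · simp
  have hfi : IntervalIntegrable f MeasureTheory.volume a b := by
    apply ContinuousOn.intervalIntegrable; rwa [uIcc_of_le hab]
  have hf2i : IntervalIntegrable (fun x => f x ^ 2) MeasureTheory.volume a b := by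
    apply ContinuousOn.intervalIntegrable; rw [uIcc_of_le hab]; exact hf.pow 2
  set I := ∫ x in a..b, f x with hI
  set c := I / (b - a) with hc
  have key : 0 ≤ ∫ x in a..b, (f x - c) ^ 2 :=
    intervalIntegral.integral_nonneg hab (fun x _ => sq_nonneg _)
  have expand : ∫ x in a..b, (f x - c) ^ 2
      = (∫ x in a..b, f x ^ 2) - 2 * c * I + (b - a) * c ^ 2 := by
    have h : ∀ x : ℝ, (f x - c) ^ 2 = (f x ^ 2 - (2 * c) * f x) + c ^ 2 := by
      intro x; ring
    simp_rw [h]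
    rw [intervalIntegral.integral_add (hf2i.sub (hfi.const_mul _)) intervalIntegrable_const,
        intervalIntegral.integral_sub hf2i (hfi.const_mul _),
        intervalIntegral.integral_const_mul, intervalIntegral.integral_const]
    simp only [smul_eq_mul]
    rfl
  rw [expand] at key
  have hba : 0 < b - a := by linarith
  have hcI : c * (b - a) = I := by rw [hc]; exact div_mul_cancel₀ _ hba.ne'
  nlinarith [key, hcI, hba, mul_le_mul_of_nonneg_left key hba.le]

/-- Squared triangle-type inequality. -/
lemma sq_tri (a b w g : ℝ) (h : w ≤ g * a + b) (hw : 0 ≤ w) (ha : 0 ≤ a) (hb : 0 ≤ b)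
    (hg : 0 < g) : w ^ 2 ≤ 2 * g ^ 2 * a ^ 2 + 2 * b ^ 2 := by
  nlinarith [sq_nonneg (g * a - b), sq_nonneg (g * a + b), mul_pos hg hg]

/-- Poincaré-type squared bound. -/
lemma poincare_sq (n ju jv a b la lb : ℝ) (h : n ≤ ju + jv) (hn : 0 ≤ n)
    (hju : 0 ≤ ju) (hjv : 0 ≤ jv) (hu2 : ju ^ 2 ≤ la * a) (hv2 : jv ^ 2 ≤ lb * b) :
    n ^ 2 ≤ 2 * la * a + 2 * lb * b := by
  nlinarith [sq_nonneg (ju - jv)]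

/-- Integrability of squared norms of continuous functions. -/
lemma normSqInt (a b : ℝ) (hab : a ≤ b) (g : ℝ → ℂ) (hg : ContinuousOn g (Icc a b)) :
    IntervalIntegrable (fun x => ‖g x‖ ^ 2) MeasureTheory.volume a b := by
  apply ContinuousOn.intervalIntegrable; rw [uIcc_of_le hab]; exact hg.norm.pow 2

set_option maxHeartbeats 1000000 in
/-- (Lemma 2.2) Equivalence of the energy norm and the standard
norm on the energy space of the E/P/E system, for smooth representatives. -/
theorem stmt3 (l₁ l₂ L c₁ c₂ ρ α β γ μ : ℝ)
    (hl₁ : 0 < l₁) (hl₁₂ : l₁ < l₂) (hl₂L : l₂ < L)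
    (hc₁ : 0 < c₁) (hc₂ : 0 < c₂) (hρ : 0 < ρ) (hα : 0 < α) (hβ : 0 < β)
    (hγ : 0 < γ) (hμ : 0 < μ) (hα₁ : 0 < α - γ ^ 2 * β) :
    ∃ C₁ > (0 : ℝ), ∃ C₂ > (0 : ℝ),
      ∀ u u' u1 v v' z p p' q y y' y1 : ℝ → ℂ,
        (∀ x ∈ Icc (0 : ℝ) l₁, HasDerivAt u (u' x) x) →
        ContinuousOn u' (Icc 0 l₁) →
        ContinuousOn u1 (Icc 0 l₁) →
        (∀ x ∈ Icc l₁ l₂, HasDerivAt v (v' x) x) →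
        ContinuousOn v' (Icc l₁ l₂) →
        ContinuousOn z (Icc l₁ l₂) →
        (∀ x ∈ Icc l₁ l₂, HasDerivAt p (p' x) x) →
        ContinuousOn p' (Icc l₁ l₂) →
        ContinuousOn q (Icc l₁ l₂) →
        (∀ x ∈ Icc l₂ L, HasDerivAt y (y' x) x) →
        ContinuousOn y' (Icc l₂ L) →
        ContinuousOn y1 (Icc l₂ L) →
        u 0 = 0 → y L = 0 → u l₁ = v l₁ → y l₂ = v l₂ →
        C₁ * ((∫ x in (0 : ℝ)..l₁, ‖u' x‖ ^ 2) + (∫ x in (0 : ℝ)..l₁, ‖u1 x‖ ^ 2) +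
            (∫ x in l₁..l₂, ‖v' x‖ ^ 2) + (∫ x in l₁..l₂, ‖v x‖ ^ 2) +
            (∫ x in l₁..l₂, ‖z x‖ ^ 2) + (∫ x in l₁..l₂, ‖p' x‖ ^ 2) +
            (∫ x in l₁..l₂, ‖q x‖ ^ 2) + (∫ x in l₂..L, ‖y' x‖ ^ 2) +
            (∫ x in l₂..L, ‖y1 x‖ ^ 2)) ≤
          ((∫ x in (0 : ℝ)..l₁, (c₁ * ‖u' x‖ ^ 2 + ‖u1 x‖ ^ 2)) +
            (∫ x in l₁..l₂, ((α - γ ^ 2 * β) * ‖v' x‖ ^ 2 + ρ * ‖z x‖ ^ 2 +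
              β * ‖(γ : ℂ) * v' x - p' x‖ ^ 2 + μ * ‖q x‖ ^ 2)) +
            (∫ x in l₂..L, (c₂ * ‖y' x‖ ^ 2 + ‖y1 x‖ ^ 2))) ∧
        ((∫ x in (0 : ℝ)..l₁, (c₁ * ‖u' x‖ ^ 2 + ‖u1 x‖ ^ 2)) +
            (∫ x in l₁..l₂, ((α - γ ^ 2 * β) * ‖v' x‖ ^ 2 + ρ * ‖z x‖ ^ 2 +
              β * ‖(γ : ℂ) * v' x - p' x‖ ^ 2 + μ * ‖q x‖ ^ 2)) +
            (∫ x in l₂..L, (c₂ * ‖y' x‖ ^ 2 + ‖y1 x‖ ^ 2))) ≤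
          C₂ * ((∫ x in (0 : ℝ)..l₁, ‖u' x‖ ^ 2) + (∫ x in (0 : ℝ)..l₁, ‖u1 x‖ ^ 2) +
            (∫ x in l₁..l₂, ‖v' x‖ ^ 2) + (∫ x in l₁..l₂, ‖v x‖ ^ 2) +
            (∫ x in l₁..l₂, ‖z x‖ ^ 2) + (∫ x in l₁..l₂, ‖p' x‖ ^ 2) +
            (∫ x in l₁..l₂, ‖q x‖ ^ 2) + (∫ x in l₂..L, ‖y' x‖ ^ 2) +
            (∫ x in l₂..L, ‖y1 x‖ ^ 2)) := by
  have h01 : (0 : ℝ) ≤ l₁ := hl₁.le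
  have h12 : l₁ ≤ l₂ := hl₁₂.le
  have h2L : l₂ ≤ L := hl₂L.le
  have h12' : (0 : ℝ) ≤ l₂ - l₁ := by linarith
  -- constants
  set t : ℝ := min 1 ((α - γ ^ 2 * β) / (2 * β * γ ^ 2)) with ht
  have ht0 : 0 < t := lt_min one_pos (by positivity)
  have ht1 : t ≤ 1 := min_le_left _ _
  have htb : t * (β * γ ^ 2) ≤ (α - γ ^ 2 * β) / 2 := by
    have h1 : t ≤ (α - γ ^ 2 * β) / (2 * β * γ ^ 2) := min_le_right _ _
    have hb : (0 : ℝ) < β * γ ^ 2 := by positivity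
    calc t * (β * γ ^ 2) ≤ ((α - γ ^ 2 * β) / (2 * β * γ ^ 2)) * (β * γ ^ 2) :=
          mul_le_mul_of_nonneg_right h1 hb.le
      _ = (α - γ ^ 2 * β) / 2 := by field_simp
  set m : ℝ := min c₁ (min 1 (min ((α - γ ^ 2 * β) / 2) (min ρ (min (t * β / 2) (min μ c₂)))))
    with hm
  have hm0 : 0 < m := by
    rw [hm]
    simp only [lt_min_iff]
    exact ⟨hc₁, one_pos, by linarith, hρ, by positivity, hμ, hc₂⟩
  have hmc₁ : m ≤ c₁ := hm ▸ min_le_left _ _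
  have hr1 : m ≤ _ := hm ▸ min_le_right c₁ (min 1 (min ((α - γ ^ 2 * β) / 2) (min ρ (min (t * β / 2) (min μ c₂)))))
  have hm1 : m ≤ 1 := hr1.trans (min_le_left _ _)
  have hr2 := hr1.trans (min_le_right 1 (min ((α - γ ^ 2 * β) / 2) (min ρ (min (t * β / 2) (min μ c₂)))))
  have hmα : m ≤ (α - γ ^ 2 * β) / 2 := hr2.trans (min_le_left _ _)
  have hr3 := hr2.trans (min_le_right ((α - γ ^ 2 * β) / 2) (min ρ (min (t * β / 2) (min μ c₂))))
  have hmρ : m ≤ ρ := hr3.trans (min_le_left _ _)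
  have hr4 := hr3.trans (min_le_right ρ (min (t * β / 2) (min μ c₂)))
  have hmt : m ≤ t * β / 2 := hr4.trans (min_le_left _ _)
  have hr5 := hr4.trans (min_le_right (t * β / 2) (min μ c₂))
  have hmμ : m ≤ μ := hr5.trans (min_le_left _ _)
  have hmc₂ : m ≤ c₂ := hr5.trans (min_le_right _ _)
  set K : ℝ := 1 + 2 * l₁ * (l₂ - l₁) + 2 * (l₂ - l₁) ^ 2 with hK
  have hK1 : 1 ≤ K := by nlinarith [mul_nonneg hl₁.le h12', sq_nonneg (l₂ - l₁)]
  have hK0 : 0 < K := by linarith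
  set C₁ : ℝ := m / K with hC₁
  set C₂ : ℝ := c₁ + 1 + (α - γ ^ 2 * β) + ρ + 2 * β * γ ^ 2 + 2 * β + μ + c₂ with hC₂
  have hC₁0 : 0 < C₁ := div_pos hm0 hK0
  have hC₂0' : 0 < C₂ := by positivity
  have hC₁K : C₁ * K = m := div_mul_cancel₀ _ hK0.ne'
  clear_value C₁ C₂ K m t
  refine ⟨C₁, hC₁0, C₂, hC₂0', ?_⟩
  intro u u' u1 v v' z p p' q y y' y1 hu hcu' hcu1 hv hcv' hcz hp hcp' hcq hy hcy' hcy1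
    hu0 hyL huv hyv
  -- integrability of all squared norms
  have iA := normSqInt 0 l₁ h01 u' hcu'
  have iA1 := normSqInt 0 l₁ h01 u1 hcu1
  have iB := normSqInt l₁ l₂ h12 v' hcv'
  have hcv : ContinuousOn v (Icc l₁ l₂) := fun x hx =>
    (hv x hx).continuousAt.continuousWithinAt
  have iV := normSqInt l₁ l₂ h12 v hcv
  have iZ := normSqInt l₁ l₂ h12 z hcz
  have iP := normSqInt l₁ l₂ h12 p' hcp'
  have iQ := normSqInt l₁ l₂ h12 q hcq
  have hcw : ContinuousOn (fun x => (γ : ℂ) * v' x - p' x) (Icc l₁ l₂) :=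
    (continuousOn_const.mul hcv').sub hcp'
  have iW := normSqInt l₁ l₂ h12 _ hcw
  have iY := normSqInt l₂ L h2L y' hcy'
  have iY1 := normSqInt l₂ L h2L y1 hcy1
  -- splitting the energy integrals
  have hsplit1 : (∫ x in (0 : ℝ)..l₁, (c₁ * ‖u' x‖ ^ 2 + ‖u1 x‖ ^ 2))
      = c₁ * (∫ x in (0 : ℝ)..l₁, ‖u' x‖ ^ 2) + ∫ x in (0 : ℝ)..l₁, ‖u1 x‖ ^ 2 := by
    rw [intervalIntegral.integral_add (iA.const_mul c₁) iA1,
      intervalIntegral.integral_const_mul]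
  have hsplit3 : (∫ x in l₂..L, (c₂ * ‖y' x‖ ^ 2 + ‖y1 x‖ ^ 2))
      = c₂ * (∫ x in l₂..L, ‖y' x‖ ^ 2) + ∫ x in l₂..L, ‖y1 x‖ ^ 2 := by
    rw [intervalIntegral.integral_add (iY.const_mul c₂) iY1,
      intervalIntegral.integral_const_mul]
  have hsplit2 : (∫ x in l₁..l₂, ((α - γ ^ 2 * β) * ‖v' x‖ ^ 2 + ρ * ‖z x‖ ^ 2 +
        β * ‖(γ : ℂ) * v' x - p' x‖ ^ 2 + μ * ‖q x‖ ^ 2))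
      = (α - γ ^ 2 * β) * (∫ x in l₁..l₂, ‖v' x‖ ^ 2) + ρ * (∫ x in l₁..l₂, ‖z x‖ ^ 2)
        + β * (∫ x in l₁..l₂, ‖(γ : ℂ) * v' x - p' x‖ ^ 2)
        + μ * (∫ x in l₁..l₂, ‖q x‖ ^ 2) := by
    rw [intervalIntegral.integral_add
        (((iB.const_mul _).add (iZ.const_mul _)).add (iW.const_mul _)) (iQ.const_mul _),
      intervalIntegral.integral_add ((iB.const_mul _).add (iZ.const_mul _)) (iW.const_mul _),
      intervalIntegral.integral_add (iB.const_mul _) (iZ.const_mul _),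
      intervalIntegral.integral_const_mul, intervalIntegral.integral_const_mul,
      intervalIntegral.integral_const_mul, intervalIntegral.integral_const_mul]
  rw [hsplit1, hsplit2, hsplit3]
  set A := ∫ x in (0 : ℝ)..l₁, ‖u' x‖ ^ 2 with hAd
  set A1 := ∫ x in (0 : ℝ)..l₁, ‖u1 x‖ ^ 2 with hA1d
  set B := ∫ x in l₁..l₂, ‖v' x‖ ^ 2 with hBd
  set V := ∫ x in l₁..l₂, ‖v x‖ ^ 2 with hVd
  set Z := ∫ x in l₁..l₂, ‖z x‖ ^ 2 with hZd
  set P := ∫ x in l₁..l₂, ‖p' x‖ ^ 2 with hPd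
  set Q := ∫ x in l₁..l₂, ‖q x‖ ^ 2 with hQd
  set W := ∫ x in l₁..l₂, ‖(γ : ℂ) * v' x - p' x‖ ^ 2 with hWd
  set Y := ∫ x in l₂..L, ‖y' x‖ ^ 2 with hYd
  set Y1 := ∫ x in l₂..L, ‖y1 x‖ ^ 2 with hY1d
  have hA0 : 0 ≤ A := intervalIntegral.integral_nonneg h01 (fun x _ => sq_nonneg _)
  have hA10 : 0 ≤ A1 := intervalIntegral.integral_nonneg h01 (fun x _ => sq_nonneg _)
  have hB0 : 0 ≤ B := intervalIntegral.integral_nonneg h12 (fun x _ => sq_nonneg _)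
  have hV0 : 0 ≤ V := intervalIntegral.integral_nonneg h12 (fun x _ => sq_nonneg _)
  have hZ0 : 0 ≤ Z := intervalIntegral.integral_nonneg h12 (fun x _ => sq_nonneg _)
  have hP0 : 0 ≤ P := intervalIntegral.integral_nonneg h12 (fun x _ => sq_nonneg _)
  have hQ0 : 0 ≤ Q := intervalIntegral.integral_nonneg h12 (fun x _ => sq_nonneg _)
  have hW0 : 0 ≤ W := intervalIntegral.integral_nonneg h12 (fun x _ => sq_nonneg _)
  have hY0 : 0 ≤ Y := intervalIntegral.integral_nonneg h2L (fun x _ => sq_nonneg _)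
  have hY10 : 0 ≤ Y1 := intervalIntegral.integral_nonneg h2L (fun x _ => sq_nonneg _)
  -- norm of real scalar in ℂ
  have hγn : ‖(γ : ℂ)‖ = γ := by
    simp [Complex.norm_real, Real.norm_eq_abs, abs_of_pos hγ]
  -- pointwise bounds relating W, B, P
  have hWle : ∀ x ∈ Icc l₁ l₂,
      ‖(γ : ℂ) * v' x - p' x‖ ^ 2 ≤ 2 * γ ^ 2 * ‖v' x‖ ^ 2 + 2 * ‖p' x‖ ^ 2 := by
    intro x _
    have h1 : ‖(γ : ℂ) * v' x - p' x‖ ≤ γ * ‖v' x‖ + ‖p' x‖ := by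
      calc ‖(γ : ℂ) * v' x - p' x‖ ≤ ‖(γ : ℂ) * v' x‖ + ‖p' x‖ := norm_sub_le _ _
        _ = γ * ‖v' x‖ + ‖p' x‖ := by rw [norm_mul, hγn]
    exact sq_tri _ _ _ _ h1 (norm_nonneg _) (norm_nonneg _) (norm_nonneg _) hγ
  have hPle : ∀ x ∈ Icc l₁ l₂,
      ‖p' x‖ ^ 2 ≤ 2 * γ ^ 2 * ‖v' x‖ ^ 2 + 2 * ‖(γ : ℂ) * v' x - p' x‖ ^ 2 := by
    intro x _
    have h1 : ‖p' x‖ ≤ γ * ‖v' x‖ + ‖(γ : ℂ) * v' x - p' x‖ := by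
      have he : p' x = (γ : ℂ) * v' x - ((γ : ℂ) * v' x - p' x) := by ring
      calc ‖p' x‖ = ‖(γ : ℂ) * v' x - ((γ : ℂ) * v' x - p' x)‖ := by rw [← he]
        _ ≤ ‖(γ : ℂ) * v' x‖ + ‖(γ : ℂ) * v' x - p' x‖ := norm_sub_le _ _
        _ = γ * ‖v' x‖ + ‖(γ : ℂ) * v' x - p' x‖ := by rw [norm_mul, hγn]
    exact sq_tri _ _ _ _ h1 (norm_nonneg _) (norm_nonneg _) (norm_nonneg _) hγ
  have hWB : W ≤ 2 * γ ^ 2 * B + 2 * P := by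
    calc W ≤ ∫ x in l₁..l₂, (2 * γ ^ 2 * ‖v' x‖ ^ 2 + 2 * ‖p' x‖ ^ 2) :=
        intervalIntegral.integral_mono_on h12 iW ((iB.const_mul _).add (iP.const_mul _)) hWle
      _ = 2 * γ ^ 2 * B + 2 * P := by
        rw [intervalIntegral.integral_add (iB.const_mul _) (iP.const_mul _),
          intervalIntegral.integral_const_mul, intervalIntegral.integral_const_mul]
  have hPB : P ≤ 2 * γ ^ 2 * B + 2 * W := by
    calc P ≤ ∫ x in l₁..l₂, (2 * γ ^ 2 * ‖v' x‖ ^ 2 + 2 * ‖(γ : ℂ) * v' x - p' x‖ ^ 2) :=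
        intervalIntegral.integral_mono_on h12 iP ((iB.const_mul _).add (iW.const_mul _)) hPle
      _ = 2 * γ ^ 2 * B + 2 * W := by
        rw [intervalIntegral.integral_add (iB.const_mul _) (iW.const_mul _),
          intervalIntegral.integral_const_mul, intervalIntegral.integral_const_mul]
  -- Poincaré-type bound on V
  have iu' : IntervalIntegrable u' MeasureTheory.volume 0 l₁ := by
    apply ContinuousOn.intervalIntegrable; rwa [uIcc_of_le h01]
  have huI : u l₁ = ∫ x in (0 : ℝ)..l₁, u' x := by
    have hftc := intervalIntegral.integral_eq_sub_of_hasDerivAt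
      (f := u) (f' := u') (by rwa [uIcc_of_le h01]) iu'
    rw [hu0, sub_zero] at hftc; exact hftc.symm
  have hul : ‖u l₁‖ ≤ ∫ x in (0 : ℝ)..l₁, ‖u' x‖ := by
    rw [huI]; exact intervalIntegral.norm_integral_le_integral_norm h01
  set Ju := ∫ x in (0 : ℝ)..l₁, ‖u' x‖ with hJud
  set Jv := ∫ x in l₁..l₂, ‖v' x‖ with hJvd
  have hJu0 : 0 ≤ Ju := intervalIntegral.integral_nonneg h01 (fun x _ => norm_nonneg _)
  have hJv0 : 0 ≤ Jv := intervalIntegral.integral_nonneg h12 (fun x _ => norm_nonneg _)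
  have csu : Ju ^ 2 ≤ l₁ * A := by
    have := cs_sq 0 l₁ h01 (fun x => ‖u' x‖) hcu'.norm
    simpa using this
  have csv : Jv ^ 2 ≤ (l₂ - l₁) * B := cs_sq l₁ l₂ h12 (fun x => ‖v' x‖) hcv'.norm
  have hvx : ∀ s ∈ Icc l₁ l₂, ‖v s‖ ≤ Ju + Jv := by
    intro s hs
    obtain ⟨hs1, hs2⟩ := hs
    have iv's : IntervalIntegrable v' MeasureTheory.volume l₁ s := by
      apply ContinuousOn.intervalIntegrable
      rw [uIcc_of_le hs1]
      exact hcv'.mono (Icc_subset_Icc le_rfl hs2)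
    have iv's2 : IntervalIntegrable v' MeasureTheory.volume s l₂ := by
      apply ContinuousOn.intervalIntegrable
      rw [uIcc_of_le hs2]
      exact hcv'.mono (Icc_subset_Icc hs1 le_rfl)
    have hftc : ∫ x in l₁..s, v' x = v s - v l₁ :=
      intervalIntegral.integral_eq_sub_of_hasDerivAt
        (fun x hx => hv x (by
          rw [uIcc_of_le hs1] at hx
          exact ⟨hx.1, hx.2.trans hs2⟩)) iv's
    have h1 : ‖v s‖ ≤ ‖v l₁‖ + ‖∫ x in l₁..s, v' x‖ := by
      rw [hftc]
      calc ‖v s‖ = ‖v l₁ + (v s - v l₁)‖ := by ring_nf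
        _ ≤ ‖v l₁‖ + ‖v s - v l₁‖ := norm_add_le _ _
    have h2 : ‖∫ x in l₁..s, v' x‖ ≤ ∫ x in l₁..s, ‖v' x‖ :=
      intervalIntegral.norm_integral_le_integral_norm hs1
    have h3 : ∫ x in l₁..s, ‖v' x‖ ≤ Jv := by
      have hadd := intervalIntegral.integral_add_adjacent_intervals iv's.norm iv's2.norm
      have h4 : 0 ≤ ∫ x in s..l₂, ‖v' x‖ :=
        intervalIntegral.integral_nonneg hs2 (fun _ _ => norm_nonneg _)
      rw [hJvd, ← hadd]
      exact le_add_of_nonneg_right h4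
    have hv1 : ‖v l₁‖ ≤ Ju := by rw [← huv]; exact hul
    exact h1.trans (add_le_add hv1 (h2.trans h3))
  have hvsq : ∀ s ∈ Icc l₁ l₂, ‖v s‖ ^ 2 ≤ 2 * l₁ * A + 2 * (l₂ - l₁) * B := by
    intro s hs
    exact poincare_sq _ _ _ _ _ _ _ (hvx s hs) (norm_nonneg _) hJu0 hJv0 csu csv
  have hVbd : V ≤ (l₂ - l₁) * (2 * l₁ * A + 2 * (l₂ - l₁) * B) := by
    calc V ≤ ∫ _x in l₁..l₂, (2 * l₁ * A + 2 * (l₂ - l₁) * B) :=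
        intervalIntegral.integral_mono_on h12 iV intervalIntegrable_const hvsq
      _ = (l₂ - l₁) * (2 * l₁ * A + 2 * (l₂ - l₁) * B) := by
        rw [intervalIntegral.integral_const, smul_eq_mul]
  clear_value A A1 B V Z P Q W Y Y1 Ju Jv
  clear hsplit1 hsplit2 hsplit3 iA iA1 iB iV iZ iP iQ iW iY iY1 hcv hcw iu' huI hul
    hvx hvsq csu csv hWle hPle hγn hu hcu' hcu1 hv hcv' hcz hp hcp' hcq hy hcy' hcy1
    hu0 hyL huv hyv hAd hA1d hBd hVd hZd hPd hQd hWd hYd hY1d hJud hJvd u u' u1 v v' z p p' q y y' y1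
  -- combine
  have hV' : V ≤ (K - 1) * (A + B) := by
    have e : (K - 1) * (A + B) = (l₂ - l₁) * (2 * l₁ * A + 2 * (l₂ - l₁) * B)
        + (2 * (l₂ - l₁) ^ 2 * A + 2 * l₁ * (l₂ - l₁) * B) := by rw [hK]; ring
    have e2 : 0 ≤ 2 * (l₂ - l₁) ^ 2 * A :=
      mul_nonneg (by positivity) hA0
    have e3 : 0 ≤ 2 * l₁ * (l₂ - l₁) * B :=
      mul_nonneg (mul_nonneg (by linarith) h12') hB0
    linarith [hVbd, e2, e3, e.le]
  have hS : A + A1 + B + V + Z + P + Q + Y + Y1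
      ≤ K * (A + A1 + B + Z + P + Q + Y + Y1) := by
    have hK1' : 0 ≤ K - 1 := by linarith
    have e : K * (A + A1 + B + Z + P + Q + Y + Y1)
        = (A + A1 + B + Z + P + Q + Y + Y1) + (K - 1) * (A + B)
          + ((K - 1) * A1 + (K - 1) * Z + (K - 1) * P + (K - 1) * Q + (K - 1) * Y
            + (K - 1) * Y1) := by ring
    linarith [hV', e.le, mul_nonneg hK1' hA10, mul_nonneg hK1' hZ0, mul_nonneg hK1' hP0,
      mul_nonneg hK1' hQ0, mul_nonneg hK1' hY0, mul_nonneg hK1' hY10]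
  constructor
  · -- lower bound
    have l1 : C₁ * (A + A1 + B + V + Z + P + Q + Y + Y1)
        ≤ m * (A + A1 + B + Z + P + Q + Y + Y1) := by
      calc C₁ * (A + A1 + B + V + Z + P + Q + Y + Y1)
          ≤ C₁ * (K * (A + A1 + B + Z + P + Q + Y + Y1)) :=
            mul_le_mul_of_nonneg_left hS hC₁0.le
        _ = m * (A + A1 + B + Z + P + Q + Y + Y1) := by rw [← hC₁K]; ring
    have key : ((α - γ ^ 2 * β) / 2) * B + (t * β / 2) * P
        ≤ (α - γ ^ 2 * β) * B + β * W := by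
      linarith [mul_nonneg (mul_nonneg (sub_nonneg.2 ht1) hβ.le) hW0,
        mul_le_mul_of_nonneg_left hPB (by positivity : (0:ℝ) ≤ t * β / 2),
        mul_le_mul_of_nonneg_right htb hB0]
    have l2 : m * (A + A1 + B + Z + P + Q + Y + Y1)
        ≤ c₁ * A + A1 + ((α - γ ^ 2 * β) / 2) * B + ρ * Z + (t * β / 2) * P
          + μ * Q + c₂ * Y + Y1 := by
      linarith [mul_le_mul_of_nonneg_right hmc₁ hA0, mul_le_mul_of_nonneg_right hm1 hA10,
        mul_le_mul_of_nonneg_right hmα hB0, mul_le_mul_of_nonneg_right hmρ hZ0,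
        mul_le_mul_of_nonneg_right hmt hP0, mul_le_mul_of_nonneg_right hmμ hQ0,
        mul_le_mul_of_nonneg_right hmc₂ hY0, mul_le_mul_of_nonneg_right hm1 hY10]
    linarith
  · -- upper bound
    have hb2 : (0:ℝ) < 2 * β * γ ^ 2 := by positivity
    have e1 : c₁ ≤ C₂ := by rw [hC₂]; linarith
    have e2 : (1:ℝ) ≤ C₂ := by rw [hC₂]; linarith
    have e3 : (α - γ ^ 2 * β) + 2 * β * γ ^ 2 ≤ C₂ := by rw [hC₂]; linarith
    have e4 : ρ ≤ C₂ := by rw [hC₂]; linarith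
    have e5 : 2 * β ≤ C₂ := by rw [hC₂]; linarith
    have e6 : μ ≤ C₂ := by rw [hC₂]; linarith
    have e7 : c₂ ≤ C₂ := by rw [hC₂]; linarith
    have hC₂0 : 0 < C₂ := by linarith
    linarith [mul_le_mul_of_nonneg_left hWB hβ.le,
      mul_le_mul_of_nonneg_right e1 hA0, mul_le_mul_of_nonneg_right e2 hA10,
      mul_le_mul_of_nonneg_right e3 hB0, mul_le_mul_of_nonneg_right e4 hZ0,
      mul_le_mul_of_nonneg_right e5 hP0, mul_le_mul_of_nonneg_right e6 hQ0,
      mul_le_mul_of_nonneg_right e7 hY0, mul_le_mul_of_nonneg_right e2 hY10,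
      mul_nonneg hC₂0.le hV0]
end

section
/- Let ρ, α, β, γ, μ be positive reals with α₁ := α − γ²β > 0, let λ ≠ 0 be a real number, let I ⊆ ℝ be an interval, and let v, p : ℝ → ℂ be twice differentiable on I satisfying v″(x) = −(λ²/α₁)(ρ v(x) + γμ p(x)) and p″(x) = −(λ²/α₁)(γρ v(x) + (μα/β) p(x)) for all x ∈ I. Then v is four times differentiable on (the interior of) I and satisfies the fourth-order equation α₁β v⁗(x) + λ²(ρβ + μα) v″(x) + μρλ⁴ v(x) = 0 for all x in the interior of I. -/
open Set

/-- From the reduced second-order coupled system (3.7), the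
component `v` is four times differentiable on the interior of `I` and satisfies
the fourth-order equation (3.8). -/
theorem stmt8 (ρ α β γ μ : ℝ) (hρ : 0 < ρ) (hα : 0 < α) (hβ : 0 < β)
    (hγ : 0 < γ) (hμ : 0 < μ) (hα₁ : 0 < α - γ ^ 2 * β)
    (lam : ℝ) (hlam : lam ≠ 0) (I : Set ℝ) (hI : I.OrdConnected)
    (v v' v'' p p' p'' : ℝ → ℂ)
    (hv' : ∀ x ∈ I, HasDerivAt v (v' x) x)
    (hv'' : ∀ x ∈ I, HasDerivAt v' (v'' x) x)
    (hp' : ∀ x ∈ I, HasDerivAt p (p' x) x)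
    (hp'' : ∀ x ∈ I, HasDerivAt p' (p'' x) x)
    (heq1 : ∀ x ∈ I, v'' x =
      -((lam ^ 2 / (α - γ ^ 2 * β) : ℝ) : ℂ) * ((ρ : ℂ) * v x + ((γ * μ : ℝ) : ℂ) * p x))
    (heq2 : ∀ x ∈ I, p'' x =
      -((lam ^ 2 / (α - γ ^ 2 * β) : ℝ) : ℂ) *
        (((γ * ρ : ℝ) : ℂ) * v x + ((μ * α / β : ℝ) : ℂ) * p x)) :
    ∃ v''' v'''' : ℝ → ℂ,
      (∀ x ∈ interior I, HasDerivAt v'' (v''' x) x) ∧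
      (∀ x ∈ interior I, HasDerivAt v''' (v'''' x) x) ∧
      (∀ x ∈ interior I,
        (((α - γ ^ 2 * β) * β : ℝ) : ℂ) * v'''' x +
          ((lam ^ 2 * (ρ * β + μ * α) : ℝ) : ℂ) * v'' x +
          ((μ * ρ * lam ^ 4 : ℝ) : ℂ) * v x = 0) := by

  set c : ℂ := ((lam ^ 2 / (α - γ ^ 2 * β) : ℝ) : ℂ) with hc
  refine ⟨fun x => -c * ((ρ : ℂ) * v' x + ((γ * μ : ℝ) : ℂ) * p' x),
    fun x => -c * ((ρ : ℂ) * v'' x + ((γ * μ : ℝ) : ℂ) * p'' x), ?_, ?_, ?_⟩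
  · intro x hx
    have hxI : x ∈ I := interior_subset hx
    have hg : HasDerivAt (fun y => -c * ((ρ : ℂ) * v y + ((γ * μ : ℝ) : ℂ) * p y))
        (-c * ((ρ : ℂ) * v' x + ((γ * μ : ℝ) : ℂ) * p' x)) x :=
      (((hv' x hxI).const_mul (ρ : ℂ)).add ((hp' x hxI).const_mul _)).const_mul _
    refine hg.congr_of_eventuallyEq ?_
    filter_upwards [isOpen_interior.mem_nhds hx] with y hy
    exact heq1 y (interior_subset hy)
  · intro x hx
    have hxI : x ∈ I := interior_subset hx
    exact (((hv'' x hxI).const_mul (ρ : ℂ)).add ((hp'' x hxI).const_mul _)).const_mul _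
  · intro x hx
    have hxI : x ∈ I := interior_subset hx
    have h1 := heq1 x hxI
    have h2 := heq2 x hxI
    have hα₁' : (α - γ ^ 2 * β) ≠ 0 := ne_of_gt hα₁
    have hβ' : β ≠ 0 := ne_of_gt hβ
    have hα₁c : ((α - γ ^ 2 * β : ℝ) : ℂ) ≠ 0 := by exact_mod_cast hα₁'
    have hβc : ((β : ℝ) : ℂ) ≠ 0 := by exact_mod_cast hβ'
    have hcA : c * (((α : ℂ)) - (γ : ℂ) ^ 2 * (β : ℂ)) = (lam : ℂ) ^ 2 := by
      rw [hc]; push_cast at hα₁c ⊢; field_simp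
    clear_value c
    simp only [h1, h2]
    push_cast at hβc ⊢
    field_simp
    linear_combination (c * ((β : ℂ) * ρ * (ρ * v x + γ * μ * p x) +
      (γ : ℂ) * μ * (γ * β * ρ * v x + α * μ * p x)) -
      (lam : ℂ) ^ 2 * ρ * μ * v x) * hcA
end

section
/- Let ρ, α, β, γ, μ be positive reals with α₁ := α − γ²β > 0, let σ₊, σ₋ be as in equation (3.9) of the paper, let λ > 0 and l₁ > 0 be reals, and suppose that cos(λσ₊l₁) ≠ 0 or cos(λσ₋l₁) ≠ 0. Let v : ℝ → ℂ be four times continuously differentiable on [0, l₁] and satisfy α₁β v⁗(x) + λ²(ρβ + μα) v″(x) + μρλ⁴ v(x) = 0 for all x ∈ [0, l₁], together with the boundary conditions v(0) = 0, v″(0) = 0, v(l₁) = 0, v′(l₁) = 0, v‴(l₁) = 0. Then v(x) = 0 for all x ∈ [0, l₁]. -/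
open Set

lemma stmt11_aux (k l₁ : ℝ) (hk : k ≠ 0) (hl₁ : 0 < l₁) (u u1 u2 : ℝ → ℂ)
    (hd1 : ∀ x ∈ Icc (0:ℝ) l₁, HasDerivAt u (u1 x) x)
    (hd2 : ∀ x ∈ Icc (0:ℝ) l₁, HasDerivAt u1 (u2 x) x)
    (hode : ∀ x ∈ Icc (0:ℝ) l₁, u2 x = -((k:ℂ))^2 * u x)
    (h0 : u 0 = 0) (h1l : u1 l₁ = 0) :
    u l₁ * (Real.cos (k * l₁) : ℂ) = 0 ∧
      (u l₁ = 0 → ∀ x ∈ Icc (0:ℝ) l₁, u x = 0) := by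
  set P : ℝ → ℂ := fun x => (Real.cos (k * x) : ℂ) * ((k:ℂ) * u x)
      - (Real.sin (k * x) : ℂ) * u1 x with hP
  set Q : ℝ → ℂ := fun x => (Real.sin (k * x) : ℂ) * ((k:ℂ) * u x)
      + (Real.cos (k * x) : ℂ) * u1 x with hQ
  have hkx : ∀ x : ℝ, HasDerivAt (fun x : ℝ => k * x) k x := by
    intro x
    simpa using (hasDerivAt_id x).const_mul k
  have hcosd : ∀ x : ℝ, HasDerivAt (fun x : ℝ => (Real.cos (k * x) : ℂ))
      (-(Real.sin (k * x)) * k : ℝ) x := by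
    intro x
    exact (((Real.hasDerivAt_cos (k * x)).comp x (hkx x))).ofReal_comp
  have hsind : ∀ x : ℝ, HasDerivAt (fun x : ℝ => (Real.sin (k * x) : ℂ))
      ((Real.cos (k * x)) * k : ℝ) x := by
    intro x
    exact (((Real.hasDerivAt_sin (k * x)).comp x (hkx x))).ofReal_comp
  have hPd : ∀ x ∈ Icc (0:ℝ) l₁, HasDerivAt P 0 x := by
    intro x hx
    have h := ((hcosd x).mul ((hd1 x hx).const_mul (k:ℂ))).sub
      ((hsind x).mul (hd2 x hx))
    refine h.congr_deriv ?_
    rw [hode x hx]; push_cast; ring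
  have hQd : ∀ x ∈ Icc (0:ℝ) l₁, HasDerivAt Q 0 x := by
    intro x hx
    have h := ((hsind x).mul ((hd1 x hx).const_mul (k:ℂ))).add
      ((hcosd x).mul (hd2 x hx))
    refine h.congr_deriv ?_
    rw [hode x hx]; push_cast; ring
  have hPc : ∀ x ∈ Icc (0:ℝ) l₁, P x = P 0 :=
    constant_of_has_deriv_right_zero
      (fun x hx => (hPd x hx).continuousAt.continuousWithinAt)
      (fun x hx => (hPd x (Ico_subset_Icc_self hx)).hasDerivWithinAt)
  have hQc : ∀ x ∈ Icc (0:ℝ) l₁, Q x = Q 0 :=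
    constant_of_has_deriv_right_zero
      (fun x hx => (hQd x hx).continuousAt.continuousWithinAt)
      (fun x hx => (hQd x (Ico_subset_Icc_self hx)).hasDerivWithinAt)
  have hP0 : P 0 = 0 := by simp [hP, h0]
  have hl1m : l₁ ∈ Icc (0:ℝ) l₁ := ⟨hl₁.le, le_rfl⟩
  have hPl : P l₁ = 0 := (hPc l₁ hl1m).trans hP0
  have hkC : (k:ℂ) ≠ 0 := Complex.ofReal_ne_zero.mpr hk
  constructor
  · have : (Real.cos (k * l₁) : ℂ) * ((k:ℂ) * u l₁) = 0 := by
      have := hPl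
      simp only [hP, h1l, mul_zero, sub_zero] at this
      exact this
    have h2 : (k:ℂ) * (u l₁ * (Real.cos (k * l₁) : ℂ)) = 0 := by
      rw [← this]; ring
    exact (mul_eq_zero.mp h2).resolve_left hkC
  · intro hul x hx
    have hQl : Q l₁ = 0 := by simp [hQ, h1l, hul]
    have hQ0 : Q 0 = 0 := (hQc l₁ hl1m).symm.trans hQl
    have hQx : Q x = 0 := (hQc x hx).trans hQ0
    have hPx : P x = 0 := (hPc x hx).trans hP0
    have hcs : ((Real.cos (k * x) : ℂ))^2 + ((Real.sin (k * x) : ℂ))^2 = 1 := by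
      have := Real.cos_sq_add_sin_sq (k * x)
      exact_mod_cast congrArg (fun t : ℝ => (t : ℂ)) this
    have hux : (k:ℂ) * u x = 0 := by
      simp only [hP] at hPx
      simp only [hQ] at hQx
      linear_combination (Real.cos (k * x) : ℂ) * hPx
        + (Real.sin (k * x) : ℂ) * hQx - ((k:ℂ) * u x) * hcs
    exact (mul_eq_zero.mp hux).resolve_left hkC


/-- Uniqueness for the fourth-order boundary value problem
(equations (3.8)–(3.12)): if at least one of `cos(λσ₊l₁)`, `cos(λσ₋l₁)` is
nonzero, then the only solution is the trivial one. -/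
theorem stmt11 (ρ α β γ μ : ℝ) (hρ : 0 < ρ) (hα : 0 < α) (hβ : 0 < β)
    (hγ : 0 < γ) (hμ : 0 < μ) (hα₁ : 0 < α - γ ^ 2 * β)
    (σp σm : ℝ)
    (hσp : σp = Real.sqrt (((ρ * β + μ * α) +
      Real.sqrt ((ρ * β - μ * α) ^ 2 + 4 * γ ^ 2 * β ^ 2 * μ * ρ)) /
        (2 * β * (α - γ ^ 2 * β))))
    (hσm : σm = Real.sqrt (((ρ * β + μ * α) -
      Real.sqrt ((ρ * β - μ * α) ^ 2 + 4 * γ ^ 2 * β ^ 2 * μ * ρ)) /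
        (2 * β * (α - γ ^ 2 * β))))
    (lam l₁ : ℝ) (hlam : 0 < lam) (hl₁ : 0 < l₁)
    (hcos : Real.cos (lam * σp * l₁) ≠ 0 ∨ Real.cos (lam * σm * l₁) ≠ 0)
    (v v1 v2 v3 v4 : ℝ → ℂ)
    (hv1 : ∀ x ∈ Icc (0 : ℝ) l₁, HasDerivAt v (v1 x) x)
    (hv2 : ∀ x ∈ Icc (0 : ℝ) l₁, HasDerivAt v1 (v2 x) x)
    (hv3 : ∀ x ∈ Icc (0 : ℝ) l₁, HasDerivAt v2 (v3 x) x)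
    (hv4 : ∀ x ∈ Icc (0 : ℝ) l₁, HasDerivAt v3 (v4 x) x)
    (hc0 : ContinuousOn v (Icc 0 l₁)) (hc1 : ContinuousOn v1 (Icc 0 l₁))
    (hc2 : ContinuousOn v2 (Icc 0 l₁)) (hc3 : ContinuousOn v3 (Icc 0 l₁))
    (hc4 : ContinuousOn v4 (Icc 0 l₁))
    (hode : ∀ x ∈ Icc (0 : ℝ) l₁,
      (((α - γ ^ 2 * β) * β : ℝ) : ℂ) * v4 x +
        ((lam ^ 2 * (ρ * β + μ * α) : ℝ) : ℂ) * v2 x +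
        ((μ * ρ * lam ^ 4 : ℝ) : ℂ) * v x = 0)
    (hbc0 : v 0 = 0) (hbc1 : v2 0 = 0) (hbc2 : v l₁ = 0)
    (hbc3 : v1 l₁ = 0) (hbc4 : v3 l₁ = 0) :
    ∀ x ∈ Icc (0 : ℝ) l₁, v x = 0 := by
  -- Algebraic preliminaries
  set D : ℝ := (ρ * β - μ * α) ^ 2 + 4 * γ ^ 2 * β ^ 2 * μ * ρ with hDdef
  have hD : 0 < D := by positivity
  have hsq : Real.sqrt D ^ 2 = D := Real.sq_sqrt hD.le
  have hsqpos : 0 < Real.sqrt D := Real.sqrt_pos.mpr hD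
  have hS : 0 < ρ * β + μ * α := by positivity
  have hβμρα₁ : 0 < β * μ * ρ * (α - γ ^ 2 * β) := by positivity
  have hDS : Real.sqrt D < ρ * β + μ * α := by
    rw [Real.sqrt_lt' hS]
    nlinarith
  have hden : 0 < 2 * β * (α - γ ^ 2 * β) := by positivity
  have hσp2 : σp ^ 2 = ((ρ * β + μ * α) + Real.sqrt D) / (2 * β * (α - γ ^ 2 * β)) := by
    rw [hσp]
    exact Real.sq_sqrt (by positivity)
  have hσm2 : σm ^ 2 = ((ρ * β + μ * α) - Real.sqrt D) / (2 * β * (α - γ ^ 2 * β)) := by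
    rw [hσm]
    exact Real.sq_sqrt (div_nonneg (by linarith) hden.le)
  have hσppos : 0 < σp := by
    rw [hσp]; exact Real.sqrt_pos.mpr (div_pos (by linarith [hsqpos]) hden)
  have hσmpos : 0 < σm := by
    rw [hσm]; exact Real.sqrt_pos.mpr (div_pos (by linarith) hden)
  have hsumP : β * (α - γ ^ 2 * β) * (σp ^ 2 + σm ^ 2) = ρ * β + μ * α := by
    rw [hσp2, hσm2, ← add_div, ← mul_div_assoc, div_eq_iff hden.ne']; ring
  have hprodP : β * (α - γ ^ 2 * β) * (σp ^ 2 * σm ^ 2) = μ * ρ := by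
    rw [hσp2, hσm2, div_mul_div_comm, ← mul_div_assoc, div_eq_iff (mul_pos hden hden).ne']
    linear_combination (-(β * (α - γ ^ 2 * β))) * hsq + (-(β * (α - γ ^ 2 * β))) * hDdef
  have hdiff : σm ^ 2 < σp ^ 2 := by
    rw [hσm2, hσp2]
    exact (div_lt_div_iff_of_pos_right hden).mpr (by linarith)
  -- cast identities
  have hsumC := congrArg (Complex.ofReal) hsumP
  have hprodC := congrArg (Complex.ofReal) hprodP
  push_cast at hsumC hprodC
  have hA : (((α - γ ^ 2 * β) * β : ℝ) : ℂ) ≠ 0 :=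
    Complex.ofReal_ne_zero.mpr (by positivity)
  have hkp : lam * σp ≠ 0 := (mul_pos hlam hσppos).ne'
  have hkm : lam * σm ≠ 0 := (mul_pos hlam hσmpos).ne'
  -- the two second-order factors
  set u : ℝ → ℂ := fun x => v2 x + ((lam * σm : ℝ) : ℂ) ^ 2 * v x with hu
  set U1 : ℝ → ℂ := fun x => v3 x + ((lam * σm : ℝ) : ℂ) ^ 2 * v1 x with hU1
  set U2 : ℝ → ℂ := fun x => v4 x + ((lam * σm : ℝ) : ℂ) ^ 2 * v2 x with hU2
  set w : ℝ → ℂ := fun x => v2 x + ((lam * σp : ℝ) : ℂ) ^ 2 * v x with hw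
  set W1 : ℝ → ℂ := fun x => v3 x + ((lam * σp : ℝ) : ℂ) ^ 2 * v1 x with hW1
  set W2 : ℝ → ℂ := fun x => v4 x + ((lam * σp : ℝ) : ℂ) ^ 2 * v2 x with hW2
  have hud1 : ∀ x ∈ Icc (0:ℝ) l₁, HasDerivAt u (U1 x) x := fun x hx =>
    (hv3 x hx).add ((hv1 x hx).const_mul _)
  have hud2 : ∀ x ∈ Icc (0:ℝ) l₁, HasDerivAt U1 (U2 x) x := fun x hx =>
    (hv4 x hx).add ((hv2 x hx).const_mul _)
  have hwd1 : ∀ x ∈ Icc (0:ℝ) l₁, HasDerivAt w (W1 x) x := fun x hx =>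
    (hv3 x hx).add ((hv1 x hx).const_mul _)
  have hwd2 : ∀ x ∈ Icc (0:ℝ) l₁, HasDerivAt W1 (W2 x) x := fun x hx =>
    (hv4 x hx).add ((hv2 x hx).const_mul _)
  have hodeu : ∀ x ∈ Icc (0:ℝ) l₁,
      U2 x = -(((lam * σp : ℝ) : ℂ)) ^ 2 * u x := by
    intro x hx
    have h := hode x hx
    have hmul : (((α - γ ^ 2 * β) * β : ℝ) : ℂ) *
        (U2 x - (-(((lam * σp : ℝ) : ℂ)) ^ 2 * u x)) = 0 := by
      simp only [hU2, hu]
      push_cast at h ⊢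
      linear_combination h + ((lam:ℂ) ^ 2 * v2 x) * hsumC + ((lam:ℂ) ^ 4 * v x) * hprodC
    exact sub_eq_zero.mp ((mul_eq_zero.mp hmul).resolve_left hA)
  have hodew : ∀ x ∈ Icc (0:ℝ) l₁,
      W2 x = -(((lam * σm : ℝ) : ℂ)) ^ 2 * w x := by
    intro x hx
    have h := hode x hx
    have hmul : (((α - γ ^ 2 * β) * β : ℝ) : ℂ) *
        (W2 x - (-(((lam * σm : ℝ) : ℂ)) ^ 2 * w x)) = 0 := by
      simp only [hW2, hw]
      push_cast at h ⊢
      linear_combination h + ((lam:ℂ) ^ 2 * v2 x) * hsumC + ((lam:ℂ) ^ 4 * v x) * hprodC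
    exact sub_eq_zero.mp ((mul_eq_zero.mp hmul).resolve_left hA)
  have hu0 : u 0 = 0 := by simp [hu, hbc0, hbc1]
  have hw0 : w 0 = 0 := by simp [hw, hbc0, hbc1]
  have hU1l : U1 l₁ = 0 := by simp [hU1, hbc3, hbc4]
  have hW1l : W1 l₁ = 0 := by simp [hW1, hbc3, hbc4]
  have hul : u l₁ = v2 l₁ := by simp [hu, hbc2]
  have hwl : w l₁ = v2 l₁ := by simp [hw, hbc2]
  obtain ⟨hP1, hP2⟩ := stmt11_aux (lam * σp) l₁ hkp hl₁ u U1 U2 hud1 hud2 hodeu hu0 hU1l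
  obtain ⟨hQ1, hQ2⟩ := stmt11_aux (lam * σm) l₁ hkm hl₁ w W1 W2 hwd1 hwd2 hodew hw0 hW1l
  rw [hul] at hP1
  rw [hwl] at hQ1
  have hz : v2 l₁ = 0 := by
    rcases hcos with h | h
    · exact (mul_eq_zero.mp hP1).resolve_right (Complex.ofReal_ne_zero.mpr h)
    · exact (mul_eq_zero.mp hQ1).resolve_right (Complex.ofReal_ne_zero.mpr h)
  have huz := hP2 (hul.trans hz)
  have hwz := hQ2 (hwl.trans hz)
  have hkne : (((lam * σp : ℝ) : ℂ)) ^ 2 - (((lam * σm : ℝ) : ℂ)) ^ 2 ≠ 0 := by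
    have he : (lam * σp) ^ 2 - (lam * σm) ^ 2 = lam ^ 2 * (σp ^ 2 - σm ^ 2) := by
      ring
    have hrpos : 0 < (lam * σp) ^ 2 - (lam * σm) ^ 2 := by
      rw [he]
      exact mul_pos (pow_pos hlam 2) (sub_pos.mpr hdiff)
    have h2 := Complex.ofReal_ne_zero.mpr hrpos.ne'
    push_cast at h2 ⊢
    exact h2
  intro x hx
  have h1 := huz x hx
  have h2 := hwz x hx
  simp only [hu] at h1
  simp only [hw] at h2
  have hmul : ((((lam * σp : ℝ) : ℂ)) ^ 2 - (((lam * σm : ℝ) : ℂ)) ^ 2) * v x = 0 := by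
    linear_combination h2 - h1
  exact (mul_eq_zero.mp hmul).resolve_left hkne
end

section
/- Let ρ, α, β, γ, μ be positive reals with α₁ := α − γ²β > 0, let σ₊, σ₋ be as in equation (3.9) of the paper, and let λ ≠ 0 be a real number. Consider the 4×4 complex matrix N = [[0, 1, 0, 0], [−λ²ρ/α₁, 0, −λ²γμ/α₁, 0], [0, 0, 0, 1], [−λ²ργ/α₁, 0, −λ²μα/(α₁β), 0]]. Then the characteristic polynomial of N equals X⁴ + (λ²(ρβ + μα)/(α₁β))X² + μρλ⁴/(α₁β), and the set of eigenvalues of N is exactly {iλσ₊, −iλσ₊, iλσ₋, −iλσ₋}, consisting of four distinct purely imaginary numbers. -/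
open Polynomial

lemma spec_iff_aux {n : Type*} [Fintype n] [DecidableEq n] (M : Matrix n n ℂ) (z : ℂ) :
    z ∈ spectrum ℂ M ↔ M.charpoly.eval z = 0 := by
  have h1 : M.charpoly.eval z = (algebraMap ℂ (Matrix n n ℂ) z - M).det := by
    rw [Matrix.charpoly, eval_det, Matrix.matPolyEquiv_charmatrix]
    simp only [eval_sub, eval_X, eval_C, Algebra.algebraMap_eq_smul_one]
    rw [Matrix.scalar_apply, Matrix.smul_eq_diagonal_mul]
    rw [mul_one]
  rw [spectrum.mem_iff, h1]
  rw [Matrix.isUnit_iff_isUnit_det, isUnit_iff_ne_zero, not_not]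

lemma charpoly4 (a b c d : ℂ) :
    (!![0,1,0,0; -a,0,-b,0; 0,0,0,1; -c,0,-d,0] : Matrix (Fin 4) (Fin 4) ℂ).charpoly
      = X^4 + C (a + d) * X^2 + C (a*d - b*c) := by
  rw [Matrix.charpoly]
  have h : Matrix.charmatrix (!![0,1,0,0; -a,0,-b,0; 0,0,0,1; -c,0,-d,0] : Matrix (Fin 4) (Fin 4) ℂ)
      = !![(X:ℂ[X]), -1, 0, 0; C a, X, C b, 0; 0, 0, X, -1; C c, 0, C d, X] := by
    ext i j
    fin_cases i <;> fin_cases j <;>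
      simp [Matrix.charmatrix_apply, Matrix.diagonal, Matrix.vecHead, Matrix.vecTail]
  rw [h]
  simp [Matrix.det_succ_row_zero, Fin.sum_univ_succ, Fin.succAbove,
    Matrix.vecHead, Matrix.vecTail]
  ring

/-- The first-order system matrix `N = N^{PE}` (equation
(3.38)) has characteristic polynomial
`X⁴ + (λ²(ρβ+μα)/(α₁β)) X² + μρλ⁴/(α₁β)` and its eigenvalues are exactly the
four distinct purely imaginary numbers `±iλσ₊`, `±iλσ₋`. -/
theorem stmt13 (ρ α β γ μ : ℝ) (hρ : 0 < ρ) (hα : 0 < α) (hβ : 0 < β)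
    (hγ : 0 < γ) (hμ : 0 < μ) (hα₁ : 0 < α - γ ^ 2 * β)
    (σp σm : ℝ)
    (hσp : σp = Real.sqrt (((ρ * β + μ * α) +
      Real.sqrt ((ρ * β - μ * α) ^ 2 + 4 * γ ^ 2 * β ^ 2 * μ * ρ)) /
        (2 * β * (α - γ ^ 2 * β))))
    (hσm : σm = Real.sqrt (((ρ * β + μ * α) -
      Real.sqrt ((ρ * β - μ * α) ^ 2 + 4 * γ ^ 2 * β ^ 2 * μ * ρ)) /
        (2 * β * (α - γ ^ 2 * β))))
    (lam : ℝ) (hlam : lam ≠ 0)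
    (N : Matrix (Fin 4) (Fin 4) ℂ)
    (hN : N = !![0, 1, 0, 0;
      ((-(lam ^ 2 * ρ / (α - γ ^ 2 * β)) : ℝ) : ℂ), 0,
        ((-(lam ^ 2 * γ * μ / (α - γ ^ 2 * β)) : ℝ) : ℂ), 0;
      0, 0, 0, 1;
      ((-(lam ^ 2 * ρ * γ / (α - γ ^ 2 * β)) : ℝ) : ℂ), 0,
        ((-(lam ^ 2 * μ * α / ((α - γ ^ 2 * β) * β)) : ℝ) : ℂ), 0]) :
    N.charpoly = X ^ 4 +
      C ((lam ^ 2 * (ρ * β + μ * α) / ((α - γ ^ 2 * β) * β) : ℝ) : ℂ) * X ^ 2 +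
      C ((μ * ρ * lam ^ 4 / ((α - γ ^ 2 * β) * β) : ℝ) : ℂ) ∧
    spectrum ℂ N = {Complex.I * (lam * σp : ℝ), -(Complex.I * (lam * σp : ℝ)),
      Complex.I * (lam * σm : ℝ), -(Complex.I * (lam * σm : ℝ))} ∧
    (Complex.I * (lam * σp : ℝ) ≠ -(Complex.I * (lam * σp : ℝ)) ∧
     Complex.I * (lam * σp : ℝ) ≠ Complex.I * (lam * σm : ℝ) ∧
     Complex.I * (lam * σp : ℝ) ≠ -(Complex.I * (lam * σm : ℝ)) ∧
     -(Complex.I * (lam * σp : ℝ)) ≠ Complex.I * (lam * σm : ℝ) ∧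
     -(Complex.I * (lam * σp : ℝ)) ≠ -(Complex.I * (lam * σm : ℝ)) ∧
     Complex.I * (lam * σm : ℝ) ≠ -(Complex.I * (lam * σm : ℝ))) ∧
    (∀ z ∈ spectrum ℂ N, z.re = 0) := by
  have hA0 : (0:ℝ) < α - γ ^ 2 * β := hα₁
  set s : ℝ := Real.sqrt ((ρ * β - μ * α) ^ 2 + 4 * γ ^ 2 * β ^ 2 * μ * ρ) with hsdef
  have hD0 : (0:ℝ) < (ρ * β - μ * α) ^ 2 + 4 * γ ^ 2 * β ^ 2 * μ * ρ := by positivity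
  have hs2 : s ^ 2 = (ρ * β - μ * α) ^ 2 + 4 * γ ^ 2 * β ^ 2 * μ * ρ :=
    Real.sq_sqrt hD0.le
  have hs0 : 0 < s := Real.sqrt_pos.mpr hD0
  have hsum0 : (0:ℝ) < ρ * β + μ * α := by positivity
  have h2 : (ρ * β + μ * α) ^ 2 - s ^ 2 = 4 * β * μ * ρ * (α - γ ^ 2 * β) := by
    rw [hs2]; ring
  have hslt : s < ρ * β + μ * α := by
    nlinarith [h2, hs0, hsum0, mul_pos (mul_pos (mul_pos hβ hμ) hρ) hA0]
  -- squares of σp, σm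
  have hσp2 : σp ^ 2 = ((ρ * β + μ * α) + s) / (2 * β * (α - γ ^ 2 * β)) := by
    rw [hσp]; exact Real.sq_sqrt (by positivity)
  have hσm2 : σm ^ 2 = ((ρ * β + μ * α) - s) / (2 * β * (α - γ ^ 2 * β)) := by
    rw [hσm]
    exact Real.sq_sqrt (div_nonneg (by linarith) (by positivity))
  have hσp0 : 0 < σp := by
    rw [hσp]; exact Real.sqrt_pos.mpr (div_pos (by linarith) (by positivity))
  have hσm0 : 0 < σm := by
    rw [hσm]; exact Real.sqrt_pos.mpr (div_pos (by linarith) (by positivity))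
  have hsum : σp ^ 2 + σm ^ 2 = (ρ * β + μ * α) / ((α - γ ^ 2 * β) * β) := by
    rw [hσp2, hσm2]; field_simp; ring
  have hprod : σp ^ 2 * σm ^ 2 = μ * ρ / ((α - γ ^ 2 * β) * β) := by
    rw [hσp2, hσm2, div_mul_div_comm]
    have hnum : ((ρ * β + μ * α) + s) * ((ρ * β + μ * α) - s)
        = 4 * β * μ * ρ * (α - γ ^ 2 * β) := by linear_combination -hs2
    rw [hnum]
    field_simp
    ring
  have hlt2 : σm ^ 2 < σp ^ 2 := by
    rw [hσp2, hσm2]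
    have hd : (0:ℝ) < 2 * β * (α - γ ^ 2 * β) := by positivity
    exact (div_lt_div_iff_of_pos_right hd).mpr (by linarith)
  have hpm : σm < σp := by nlinarith [hlt2, hσm0, hσp0]
  have hσpne : σp ≠ σm := hpm.ne'
  -- characteristic polynomial
  have hN' : N = !![0, 1, 0, 0;
      -(((lam ^ 2 * ρ / (α - γ ^ 2 * β) : ℝ)) : ℂ), 0,
        -(((lam ^ 2 * γ * μ / (α - γ ^ 2 * β) : ℝ)) : ℂ), 0;
      0, 0, 0, 1;
      -(((lam ^ 2 * ρ * γ / (α - γ ^ 2 * β) : ℝ)) : ℂ), 0,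
        -(((lam ^ 2 * μ * α / ((α - γ ^ 2 * β) * β) : ℝ)) : ℂ), 0] := by
    rw [hN]; push_cast; norm_num
  have hcp : N.charpoly = X ^ 4 +
      C ((lam ^ 2 * (ρ * β + μ * α) / ((α - γ ^ 2 * β) * β) : ℝ) : ℂ) * X ^ 2 +
      C ((μ * ρ * lam ^ 4 / ((α - γ ^ 2 * β) * β) : ℝ) : ℂ) := by
    rw [hN', charpoly4]
    have e1 : ((lam ^ 2 * ρ / (α - γ ^ 2 * β) : ℝ) : ℂ)
          + ((lam ^ 2 * μ * α / ((α - γ ^ 2 * β) * β) : ℝ) : ℂ)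
        = ((lam ^ 2 * (ρ * β + μ * α) / ((α - γ ^ 2 * β) * β) : ℝ) : ℂ) := by
      rw [← Complex.ofReal_add]
      congr 1
      field_simp
    have e2 : ((lam ^ 2 * ρ / (α - γ ^ 2 * β) : ℝ) : ℂ)
          * ((lam ^ 2 * μ * α / ((α - γ ^ 2 * β) * β) : ℝ) : ℂ)
        - ((lam ^ 2 * γ * μ / (α - γ ^ 2 * β) : ℝ) : ℂ)
          * ((lam ^ 2 * ρ * γ / (α - γ ^ 2 * β) : ℝ) : ℂ)
        = ((μ * ρ * lam ^ 4 / ((α - γ ^ 2 * β) * β) : ℝ) : ℂ) := by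
      rw [← Complex.ofReal_mul, ← Complex.ofReal_mul, ← Complex.ofReal_sub]
      congr 1
      field_simp
    rw [e1, e2]
  -- real coefficient identities
  have hBr : lam ^ 2 * (ρ * β + μ * α) / ((α - γ ^ 2 * β) * β)
      = (lam * σp) ^ 2 + (lam * σm) ^ 2 := by
    rw [mul_div_assoc, ← hsum]; ring
  have hCr : μ * ρ * lam ^ 4 / ((α - γ ^ 2 * β) * β)
      = (lam * σp) ^ 2 * (lam * σm) ^ 2 := by
    rw [show (lam * σp) ^ 2 * (lam * σm) ^ 2 = lam ^ 4 * (σp ^ 2 * σm ^ 2) by ring,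
      hprod]
    field_simp
  -- factorization of the evaluated polynomial
  have hfact : ∀ z : ℂ, z ^ 4
      + ((lam ^ 2 * (ρ * β + μ * α) / ((α - γ ^ 2 * β) * β) : ℝ) : ℂ) * z ^ 2
      + ((μ * ρ * lam ^ 4 / ((α - γ ^ 2 * β) * β) : ℝ) : ℂ)
      = (z - Complex.I * ((lam * σp : ℝ) : ℂ)) * (z + Complex.I * ((lam * σp : ℝ) : ℂ))
        * (z - Complex.I * ((lam * σm : ℝ) : ℂ)) * (z + Complex.I * ((lam * σm : ℝ) : ℂ)) := by
    intro z
    rw [hBr, hCr]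
    push_cast
    linear_combination ((((lam:ℂ)*σp) ^ 2 + ((lam:ℂ)*σm) ^ 2) * z ^ 2
      + ((lam:ℂ)*σp) ^ 2 * ((lam:ℂ)*σm) ^ 2
      - Complex.I ^ 2 * ((lam:ℂ)*σp) ^ 2 * ((lam:ℂ)*σm) ^ 2) * Complex.I_sq
  have hspec : spectrum ℂ N = {Complex.I * ((lam * σp : ℝ) : ℂ),
      -(Complex.I * ((lam * σp : ℝ) : ℂ)), Complex.I * ((lam * σm : ℝ) : ℂ),
      -(Complex.I * ((lam * σm : ℝ) : ℂ))} := by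
    ext z
    rw [spec_iff_aux, hcp]
    simp only [eval_add, eval_mul, eval_pow, eval_X, eval_C]
    rw [hfact z]
    simp only [mul_eq_zero, sub_eq_zero, add_eq_zero_iff_eq_neg, Set.mem_insert_iff,
      Set.mem_singleton_iff, or_assoc]
  have key2 : ∀ x y : ℝ, x ≠ y → Complex.I * (x:ℂ) ≠ Complex.I * (y:ℂ) := by
    intro x y hxy h
    exact hxy (by exact_mod_cast mul_left_cancel₀ Complex.I_ne_zero h)
  have negconv : ∀ x : ℝ, -(Complex.I * (x:ℂ)) = Complex.I * ((-x : ℝ):ℂ) := by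
    intro x; push_cast; ring
  refine ⟨hcp, hspec, ⟨?_, ?_, ?_, ?_, ?_, ?_⟩, ?_⟩
  · rw [negconv]
    refine key2 _ _ (fun h => ?_)
    exact mul_ne_zero hlam hσp0.ne' (by linarith)
  · exact key2 _ _ (fun h => hσpne (mul_left_cancel₀ hlam h))
  · rw [negconv]
    refine key2 _ _ (fun h => ?_)
    have h3 : σp = -σm := mul_left_cancel₀ hlam (by linear_combination h)
    linarith
  · rw [negconv]
    refine key2 _ _ (fun h => ?_)
    have h3 : -σp = σm := mul_left_cancel₀ hlam (by linear_combination h)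
    linarith
  · rw [negconv, negconv]
    refine key2 _ _ (fun h => ?_)
    exact hσpne (mul_left_cancel₀ hlam (by linear_combination -h))
  · rw [negconv]
    refine key2 _ _ (fun h => ?_)
    exact mul_ne_zero hlam hσm0.ne' (by linarith)
  · intro z hz
    rw [hspec] at hz
    simp only [Set.mem_insert_iff, Set.mem_singleton_iff] at hz
    rcases hz with h|h|h|h <;> subst h <;> simp [Complex.mul_re]
end
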